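/- arXiv:1009.0488 — 2 statements merged into one kernel-verified Lean document; each statement's English description precedes it below -/
import Mathlib

section
/- Let τ be an imaginary quadratic algebraic integer with |τ| > 1, w ≥ 2, and D the minimal norm representatives digit set modulo τ^w. Then every element z ∈ Z[τ] admits a unique finite w-NAF expansion z = Σ_{j=0}^{ℓ−1} η_j τ^j with digits η_j ∈ D such that every block of w consecutive digits contains at most one nonzero digit; i.e., D is a width-w non-adjacent digit set. -/
/-- `D` is a reduced residue digit set modulo `τ^w`. -/
def IsReducedResidueDigitSet (τ : ℂ) (w : ℕ) (D : Finset ℂ) : Prop :=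
  (0 : ℂ) ∈ D ∧
  (∀ d ∈ D, d ∈ Algebra.adjoin ℤ ({τ} : Set ℂ)) ∧
  (∀ d ∈ D, d ≠ 0 → ¬ ∃ x ∈ Algebra.adjoin ℤ ({τ} : Set ℂ), d = τ * x) ∧
  (∀ d₁ ∈ D, ∀ d₂ ∈ D, d₁ ≠ 0 → d₂ ≠ 0 →
    (∃ x ∈ Algebra.adjoin ℤ ({τ} : Set ℂ), d₁ - d₂ = τ ^ w * x) → d₁ = d₂) ∧
  (∀ z ∈ Algebra.adjoin ℤ ({τ} : Set ℂ),
    (¬ ∃ x ∈ Algebra.adjoin ℤ ({τ} : Set ℂ), z = τ * x) →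
    ∃ d ∈ D, ∃ x ∈ Algebra.adjoin ℤ ({τ} : Set ℂ), z - d = τ ^ w * x)

/-- `D` is a minimal norm representatives digit set modulo `τ^w`: a reduced residue digit
set in which every nonzero digit has minimal absolute value (equivalently, minimal norm)
within its residue class modulo `τ^w`. -/
def IsMinimalNormDigitSet (τ : ℂ) (w : ℕ) (D : Finset ℂ) : Prop :=
  IsReducedResidueDigitSet τ w D ∧
  ∀ d ∈ D, d ≠ 0 → ∀ ξ ∈ Algebra.adjoin ℤ ({τ} : Set ℂ),
    (∃ x ∈ Algebra.adjoin ℤ ({τ} : Set ℂ), ξ - d = τ ^ w * x) →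
    ‖d‖ ≤ ‖ξ‖



open Complex

section Base
variable {p q : ℤ} {τ : ℂ}

lemma him (hτq : τ ^ 2 - (p : ℂ) * τ + (q : ℂ) = 0) (hdisc : p ^ 2 < 4 * q) : τ.im ≠ 0 := by
  intro h0
  have hre : (τ^2 - (p:ℂ)*τ + q).re = 0 := by rw [hτq]; rfl
  simp [Complex.sub_re, Complex.add_re, Complex.mul_re, Complex.sq_norm, pow_two, Complex.mul_im, h0] at hre
  have : ((p:ℝ))^2 < 4*(q:ℝ) := by exact_mod_cast hdisc
  nlinarith [hre, this, sq_nonneg (2*τ.re - (p:ℝ))]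

lemma hre_eq (hτq : τ ^ 2 - (p : ℂ) * τ + (q : ℂ) = 0) (hdisc : p ^ 2 < 4 * q) :
    τ.re = (p:ℝ)/2 := by
  have h := him hτq hdisc
  have him0 : (τ^2 - (p:ℂ)*τ + q).im = 0 := by rw [hτq]; rfl
  simp [Complex.sub_im, Complex.add_im, Complex.mul_im, pow_two, Complex.mul_re] at him0
  have : τ.im * (2*τ.re - p) = 0 := by linarith
  rcases mul_eq_zero.mp this with h1 | h2
  · exact absurd h1 h
  · linarith

lemma himsq (hτq : τ ^ 2 - (p : ℂ) * τ + (q : ℂ) = 0) (hdisc : p ^ 2 < 4 * q) :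
    τ.im^2 = (q:ℝ) - (p:ℝ)^2/4 := by
  have hre : (τ^2 - (p:ℂ)*τ + q).re = 0 := by rw [hτq]; rfl
  have h2 := hre_eq hτq hdisc
  simp [Complex.sub_re, Complex.add_re, Complex.mul_re, pow_two, Complex.mul_im, h2] at hre
  nlinarith [hre]

lemma hnormSqτ (hτq : τ ^ 2 - (p : ℂ) * τ + (q : ℂ) = 0) (hdisc : p ^ 2 < 4 * q) :
    Complex.normSq τ = (q:ℝ) := by
  have h1 := hre_eq hτq hdisc
  have h2 := himsq hτq hdisc
  rw [Complex.normSq_apply, h1]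
  nlinarith [h2]



section Mem
variable {p q : ℤ} {τ : ℂ}

lemma coords (hτq : τ ^ 2 - (p : ℂ) * τ + (q : ℂ) = 0) :
    ∀ z ∈ Algebra.adjoin ℤ ({τ} : Set ℂ), ∃ a b : ℤ, z = (a:ℂ) + (b:ℂ) * τ := by
  intro z hz
  induction hz using Algebra.adjoin_induction with
  | mem x hx =>
    rcases hx with rfl
    exact ⟨0, 1, by simp⟩
  | algebraMap r => exact ⟨r, 0, by simp⟩
  | add x y hx hy ihx ihy =>
    obtain ⟨a, b, rfl⟩ := ihx
    obtain ⟨c, e, rfl⟩ := ihy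
    exact ⟨a + c, b + e, by push_cast; ring⟩
  | mul x y hx hy ihx ihy =>
    obtain ⟨a, b, rfl⟩ := ihx
    obtain ⟨c, e, rfl⟩ := ihy
    refine ⟨a*c - q*b*e, a*e + b*c + p*b*e, ?_⟩
    push_cast
    linear_combination ((b:ℂ) * e) * hτq

lemma mem_A (a b : ℤ) : (a:ℂ) + (b:ℂ) * τ ∈ Algebra.adjoin ℤ ({τ} : Set ℂ) := by
  exact add_mem (Subalgebra.intCast_mem _ a)
    (mul_mem (Subalgebra.intCast_mem _ b) (Algebra.subset_adjoin rfl))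

lemma coord_unique (him' : τ.im ≠ 0) {a b c e : ℤ}
    (h : (a:ℂ) + (b:ℂ) * τ = (c:ℂ) + (e:ℂ) * τ) : a = c ∧ b = e := by
  have hIm : (a:ℝ) * 0 + (b:ℝ) * τ.im = (c:ℝ)*0 + (e:ℝ) * τ.im := by
    have := congrArg Complex.im h
    simpa [Complex.add_im, Complex.mul_im] using this
  have hb : b = e := by
    have : (b:ℝ) * τ.im = (e:ℝ) * τ.im := by linarith
    have := mul_right_cancel₀ him' this
    exact_mod_cast this
  subst hb
  have hRe := congrArg Complex.re h
  simp [Complex.add_re, Complex.mul_re] at hRe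
  constructor
  · exact_mod_cast hRe
  · rfl

lemma normSq_coords (hτq : τ ^ 2 - (p : ℂ) * τ + (q : ℂ) = 0) (hdisc : p ^ 2 < 4 * q)
    (a b : ℤ) : Complex.normSq ((a:ℂ) + (b:ℂ) * τ) = ((a^2 + p*a*b + q*b^2 : ℤ) : ℝ) := by
  have h1 := hre_eq hτq hdisc
  have h2 := himsq hτq hdisc
  simp [Complex.normSq_apply, Complex.add_re, Complex.add_im, Complex.mul_re, Complex.mul_im, h1]
  nlinarith [h2]

lemma normSq_int (hτq : τ ^ 2 - (p : ℂ) * τ + (q : ℂ) = 0) (hdisc : p ^ 2 < 4 * q) :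
    ∀ z ∈ Algebra.adjoin ℤ ({τ} : Set ℂ), ∃ k : ℤ, Complex.normSq z = (k:ℝ) := by
  intro z hz
  obtain ⟨a, b, rfl⟩ := coords hτq z hz
  exact ⟨_, normSq_coords hτq hdisc a b⟩

lemma div_iff (hτq : τ ^ 2 - (p : ℂ) * τ + (q : ℂ) = 0) (hdisc : p ^ 2 < 4 * q)
    (a b : ℤ) :
    (∃ x ∈ Algebra.adjoin ℤ ({τ} : Set ℂ), (a:ℂ) + (b:ℂ) * τ = τ * x) ↔ q ∣ a := by
  constructor
  · rintro ⟨x, hx, hEq⟩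
    obtain ⟨c, e, rfl⟩ := coords hτq x hx
    have : (a:ℂ) + (b:ℂ) * τ = ((-q*e : ℤ):ℂ) + ((c + p*e : ℤ):ℂ) * τ := by
      push_cast
      linear_combination hEq + (e:ℂ) * hτq
    have h := coord_unique (him hτq hdisc) this
    exact ⟨-e, by linarith [h.1]⟩
  · rintro ⟨a', rfl⟩
    refine ⟨((p*a' + b : ℤ):ℂ) + ((-a' : ℤ):ℂ) * τ, mem_A _ _, ?_⟩
    push_cast
    linear_combination (a':ℂ) * hτq

end Mem


open Complex Finset

noncomputable section Seq

def prep (d : ℂ) (k : ℕ) (η : ℕ → ℂ) : ℕ → ℂ :=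
  fun j => if j = 0 then d else if j < k then 0 else η (j - k)

def IsNAF (w : ℕ) (η : ℕ → ℂ) : Prop :=
  ∀ i j : ℕ, i < j → j < i + w → η i ≠ 0 → η j = 0

variable {τ : ℂ} {d : ℂ} {k w : ℕ} {η : ℕ → ℂ} {ℓ : ℕ}

lemma tsumEqSum (h : ∀ j, ℓ ≤ j → η j = 0) :
    ∑' j : ℕ, η j * τ ^ j = ∑ j ∈ range ℓ, η j * τ ^ j := by
  refine tsum_eq_sum ?_
  intro b hb
  rw [h b (by simpa using hb)]
  ring

lemma prep_bound (hk : 1 ≤ k) (h : ∀ j, ℓ ≤ j → η j = 0) :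
    ∀ j, k + ℓ ≤ j → prep d k η j = 0 := by
  intro j hj
  have hj0 : j ≠ 0 := by omega
  have hjk : ¬ j < k := by omega
  simp only [prep, if_neg hj0, if_neg hjk]
  exact h _ (by omega)

lemma tsum_prep (hk : 1 ≤ k) (h : ∀ j, ℓ ≤ j → η j = 0) :
    ∑' j : ℕ, prep d k η j * τ ^ j = d + τ ^ k * ∑' j : ℕ, η j * τ ^ j := by
  rw [tsumEqSum (ℓ := k + ℓ) (prep_bound hk h), tsumEqSum h, Finset.sum_range_add]
  have h1 : ∑ j ∈ range k, prep d k η j * τ ^ j = d := by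
    rw [Finset.sum_eq_single_of_mem 0 (by simp; omega)]
    · simp [prep]
    · intro b _ hb0
      have hbk : b < k := by simpa using ‹b ∈ range k›
      simp [prep, hb0, hbk]
  have h2 : ∀ x ∈ range ℓ, prep d k η (k + x) * τ ^ (k + x) = τ ^ k * (η x * τ ^ x) := by
    intro x _
    have h0 : k + x ≠ 0 := by omega
    have h1' : ¬ k + x < k := by omega
    simp only [prep, if_neg h0, if_neg h1', Nat.add_sub_cancel_left]
    rw [pow_add]
    ring
  rw [h1, Finset.sum_congr rfl h2, ← Finset.mul_sum]

lemma prep_mem {D : Finset ℂ} (hd : d ∈ D) (h0 : (0:ℂ) ∈ D) (h : ∀ j, η j ∈ D) :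
    ∀ j, prep d k η j ∈ D := by
  intro j
  unfold prep
  split
  · exact hd
  · split
    · exact h0
    · exact h _

lemma naf_prep_zero (hη : IsNAF w η) : IsNAF w (prep 0 1 η) := by
  intro i j hij hjw hi
  unfold prep at *
  rcases Nat.eq_zero_or_pos i with rfl | hi0
  · simp at hi
  · have hi1 : i ≠ 0 := by omega
    have hj1 : j ≠ 0 := by omega
    simp only [if_neg hi1, if_neg (by omega : ¬ i < 1)] at hi
    simp only [if_neg hj1, if_neg (by omega : ¬ j < 1)]
    exact hη (i-1) (j-1) (by omega) (by omega) hi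

lemma naf_prep_digit (hw : 1 ≤ w) (hη : IsNAF w η) : IsNAF w (prep d w η) := by
  intro i j hij hjw hi
  unfold prep at *
  rcases Nat.eq_zero_or_pos i with rfl | hi0
  · have hj1 : j ≠ 0 := by omega
    simp only [if_neg hj1, if_pos (by omega : j < w)]
  · have hi1 : i ≠ 0 := by omega
    by_cases hiw : i < w
    · simp [hi1, hiw] at hi
    · have hj1 : j ≠ 0 := by omega
      simp only [if_neg hi1, if_neg hiw] at hi
      simp only [if_neg hj1, if_neg (by omega : ¬ j < w)]
      exact hη (i-w) (j-w) (by omega) (by omega) hi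

set_option maxHeartbeats 800000 in
lemma tsum_mem_adjoin {D : Finset ℂ}
    (hD : ∀ d ∈ D, d ∈ Algebra.adjoin ℤ ({τ} : Set ℂ))
    (h : ∀ j, η j ∈ D) (hb : ∀ j, ℓ ≤ j → η j = 0) :
    (∑' j : ℕ, η j * τ ^ j) ∈ Algebra.adjoin ℤ ({τ} : Set ℂ) := by
  rw [tsumEqSum hb]
  refine Subalgebra.sum_mem _ ?_
  intro j _
  exact mul_mem (hD _ (h j)) (Subalgebra.pow_mem _ (Algebra.self_mem_adjoin_singleton ℤ τ) j)


section K
variable {p q : ℤ} {τ : ℂ} {w : ℕ} {D : Finset ℂ}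

variable {p q : ℤ} {τ : ℂ} {w : ℕ} {D : Finset ℂ}

lemma int_gap {k k' : ℤ} {n : ℕ} (h1 : (k:ℝ) < (k':ℝ)) (h2 : (k':ℝ) < (n:ℝ)+1) :
    (k:ℝ) < (n:ℝ) := by
  have e1 : k < k' := by exact_mod_cast h1
  have e2 : k' < (n:ℤ) + 1 := by exact_mod_cast h2
  have : k < (n:ℤ) := by omega
  exact_mod_cast this

lemma keyD (hτq : τ ^ 2 - (p : ℂ) * τ + (q : ℂ) = 0) (hdisc : p ^ 2 < 4 * q)
    (hq2 : 2 ≤ q) (hw : 2 ≤ w)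
    (hmin : ∀ d ∈ D, d ≠ 0 → ∀ ξ ∈ Algebra.adjoin ℤ ({τ} : Set ℂ),
      (∃ x ∈ Algebra.adjoin ℤ ({τ} : Set ℂ), ξ - d = τ ^ w * x) →
      ‖d‖ ≤ ‖ξ‖)
    (z : ℂ) (hz : z ∈ Algebra.adjoin ℤ ({τ} : Set ℂ)) (hz0 : z ≠ 0)
    (hnd : ¬ ∃ x ∈ Algebra.adjoin ℤ ({τ} : Set ℂ), z = τ * x)
    (d : ℂ) (hdD : d ∈ D) (x : ℂ) (hx : x ∈ Algebra.adjoin ℤ ({τ} : Set ℂ))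
    (heq : z - d = τ ^ w * x) :
    normSq x < normSq z ∨ (q = 2 ∧ w = 2 ∧ d = -z) := by
  have hnsτ : normSq τ = (q:ℝ) := hnormSqτ hτq hdisc
  have hd0 : d ≠ 0 := by
    rintro rfl
    refine hnd ⟨τ ^ (w-1) * x, mul_mem (Subalgebra.pow_mem _ (Algebra.self_mem_adjoin_singleton ℤ τ) _) hx, ?_⟩
    have : τ ^ w = τ * τ ^ (w - 1) := by
      rw [← pow_succ']
      congr 1
      omega
    rw [← mul_assoc, ← this]
    linear_combination heq
  have habs_le : ‖d‖ ≤ ‖z‖ :=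
    hmin d hdD hd0 z hz ⟨x, hx, heq⟩
  have hns_le : normSq d ≤ normSq z := by
    rw [← Complex.sq_norm, ← Complex.sq_norm]
    exact pow_le_pow_left₀ (norm_nonneg d) habs_le 2
  have hnspos : 0 < normSq z := normSq_pos.mpr hz0
  have hq1 : (1:ℝ) < (q:ℝ) := by exact_mod_cast lt_of_lt_of_le one_lt_two hq2
  have nq : normSq (z - d) = (q:ℝ)^w * normSq x := by
    rw [heq, normSq_mul, map_pow, hnsτ]
  have habs_zd : ‖z - d‖ ≤ 2 * ‖z‖ := by
    calc ‖z - d‖ ≤ ‖z‖ + ‖d‖ := by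
          exact norm_sub_le z d
      _ ≤ 2 * ‖z‖ := by linarith
  have nzd : normSq (z - d) ≤ 4 * normSq z := by
    rw [← Complex.sq_norm, ← Complex.sq_norm]
    nlinarith [norm_nonneg (z - d), norm_nonneg z, habs_zd]
  have hqw4 : (4:ℝ) ≤ (q:ℝ)^w := by
    calc (4:ℝ) = 2^2 := by norm_num
      _ ≤ (q:ℝ)^2 := by
          have h2q : (2:ℝ) ≤ (q:ℝ) := by exact_mod_cast hq2
          exact pow_le_pow_left₀ (by norm_num) h2q 2
      _ ≤ (q:ℝ)^w := pow_le_pow_right₀ (by linarith) hw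
  have hxle : normSq x ≤ normSq z := by
    nlinarith [nq, nzd, hqw4, normSq_nonneg x]
  rcases lt_or_eq_of_le hxle with hlt | heqn
  · exact Or.inl hlt
  · right
    have h4 : (q:ℝ)^w ≤ 4 := by nlinarith [nq, nzd, heqn]
    have hw2 : w = 2 := by
      by_contra hne
      have h3 : 3 ≤ w := by omega
      have : (8:ℝ) ≤ (q:ℝ)^w := by
        calc (8:ℝ) = 2^3 := by norm_num
          _ ≤ (q:ℝ)^3 := by
              have h2q : (2:ℝ) ≤ (q:ℝ) := by exact_mod_cast hq2
              exact pow_le_pow_left₀ (by norm_num) h2q 3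
          _ ≤ (q:ℝ)^w := pow_le_pow_right₀ (by linarith) h3
      linarith
    have hqq : q = 2 := by
      by_contra hne
      have h3 : 3 ≤ q := by omega
      have : (9:ℝ) ≤ (q:ℝ)^w := by
        rw [hw2]
        have h3q : (3:ℝ) ≤ (q:ℝ) := by exact_mod_cast h3
        calc (9:ℝ) = 3^2 := by norm_num
          _ ≤ (q:ℝ)^2 := pow_le_pow_left₀ (by norm_num) h3q 2
      linarith
    refine ⟨hqq, hw2, ?_⟩
    have hq4 : (q:ℝ)^w = 4 := by rw [hqq, hw2]; norm_num
    have hzd4 : normSq (z - d) = 4 * normSq z := by rw [nq, hq4, ← heqn]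
    have hpar : normSq (z + d) + normSq (z - d) = 2 * normSq z + 2 * normSq d := by
      simp [Complex.normSq_apply, Complex.add_re, Complex.add_im, Complex.sub_re, Complex.sub_im]
      ring
    have : normSq (z + d) ≤ 0 := by linarith
    have hzd0 : z + d = 0 := by
      have := le_antisymm this (normSq_nonneg _)
      exact normSq_eq_zero.mp this
    linear_combination hzd0
lemma gap_aux (hτq : τ ^ 2 - (p : ℂ) * τ + (q : ℂ) = 0) (hdisc : p ^ 2 < 4 * q)
    {x z : ℂ} (hx : x ∈ Algebra.adjoin ℤ ({τ} : Set ℂ)) (hz : z ∈ Algebra.adjoin ℤ ({τ} : Set ℂ))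
    {n : ℕ} (h1 : normSq x < normSq z) (h2 : normSq z < (n:ℝ) + 1) :
    normSq x < (n:ℝ) := by
  obtain ⟨k, hk⟩ := normSq_int hτq hdisc z hz
  obtain ⟨k', hk'⟩ := normSq_int hτq hdisc x hx
  rw [hk'] at h1 ⊢
  rw [hk] at h1 h2
  exact int_gap h1 h2

lemma zero_naf {ww : ℕ} : IsNAF ww (fun _ => (0:ℂ)) := by
  intro i j _ _ hi
  exact absurd rfl hi


lemma p2_case
    (hτq : τ ^ 2 - (p : ℂ) * τ + ((2:ℤ) : ℂ) = 0) (hdisc : p ^ 2 < 4 * 2)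
    (hτ0 : τ ≠ 0)
    (h0D : (0:ℂ) ∈ D)
    (hDA : ∀ d ∈ D, d ∈ Algebra.adjoin ℤ ({τ} : Set ℂ))
    (hdigit : ∀ z ∈ Algebra.adjoin ℤ ({τ} : Set ℂ),
      (¬ ∃ x ∈ Algebra.adjoin ℤ ({τ} : Set ℂ), z = τ * x) →
      ∃ d ∈ D, ∃ x ∈ Algebra.adjoin ℤ ({τ} : Set ℂ), z - d = τ ^ 2 * x)
    (hmin : ∀ d ∈ D, d ≠ 0 → ∀ ξ ∈ Algebra.adjoin ℤ ({τ} : Set ℂ),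
      (∃ x ∈ Algebra.adjoin ℤ ({τ} : Set ℂ), ξ - d = τ ^ 2 * x) →
      ‖d‖ ≤ ‖ξ‖)
    {n : ℕ}
    (ih : ∀ z ∈ Algebra.adjoin ℤ ({τ} : Set ℂ), normSq z < (n:ℝ) →
      ∃ η : ℕ → ℂ, (∀ j, η j ∈ D) ∧ (∃ ℓ : ℕ, ∀ j, ℓ ≤ j → η j = 0) ∧ IsNAF 2 η ∧
        z = ∑' j : ℕ, η j * τ ^ j)
    (z : ℂ) (hz : z ∈ Algebra.adjoin ℤ ({τ} : Set ℂ)) (hz0 : z ≠ 0)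
    (hdD : -z ∈ D)
    (x : ℂ) (hx : x ∈ Algebra.adjoin ℤ ({τ} : Set ℂ)) (heq : z - -z = τ ^ 2 * x)
    (h2z : 2*z = τ^2 * x)
    (hτq2 : τ^2 - (p:ℂ)*τ + 2 = 0)
    (a b : ℤ) (hab : z = (a:ℂ) + (b:ℂ)*τ) (c e : ℤ) (hce : x = (c:ℂ) + (e:ℂ)*τ)
    (ha_odd : ¬ (2:ℤ) ∣ a)
    (hE1 : 2*a = -2*c - 2*p*e)
    (hlt : normSq z < (n:ℝ) + 1)
    (hp2 : p = 2 ∨ p = -2) :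
    ∃ η : ℕ → ℂ, (∀ j, η j ∈ D) ∧ (∃ ℓ : ℕ, ∀ j, ℓ ≤ j → η j = 0) ∧ IsNAF 2 η ∧
      z = ∑' j : ℕ, η j * τ ^ j := by
  have hnsτ : normSq τ = ((2:ℤ):ℝ) := hnormSqτ hτq hdisc
  have hp4c : (p:ℂ)^2 = 4 := by rcases hp2 with rfl|rfl <;> norm_num
  have hτ4 : τ^4 = -4 := by
    linear_combination (τ^2 + (p:ℂ)*τ + 2)*hτq2 + τ^2*hp4c
  have hc_odd : ¬ (2:ℤ) ∣ c := by rcases hp2 with rfl|rfl <;> omega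
  have hdivx : ¬ ∃ y ∈ Algebra.adjoin ℤ ({τ} : Set ℂ), x = τ*y := by
    rw [hce]
    exact fun h => hc_odd ((div_iff hτq hdisc c e).mp h)
  have hx0 : x ≠ 0 := by
    intro h
    rw [h, mul_zero] at h2z
    exact hz0 (by linear_combination (1/2)*h2z)
  obtain ⟨d₁, hd₁D, x₁, hx₁, heq₁⟩ := hdigit x hx hdivx
  have hnsx : normSq x = normSq z := by
    have h1 := congrArg normSq h2z
    rw [normSq_mul, normSq_mul, map_pow, hnsτ] at h1
    have h2 : normSq (2:ℂ) = 4 := by norm_num [Complex.normSq_apply]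
    rw [h2] at h1
    push_cast at h1
    linarith
  rcases keyD hτq hdisc le_rfl le_rfl hmin x hx hx0 hdivx d₁ hd₁D x₁ hx₁ heq₁
    with hlt2 | ⟨_, _, hd₁x⟩
  · have hlt2' : normSq x₁ < normSq z := by rw [← hnsx]; exact hlt2
    obtain ⟨η₂, hη₂, ⟨ℓ, hb₂⟩, hnaf₂, hsum₂⟩ := ih x₁ hx₁ (gap_aux hτq hdisc hx₁ hz hlt2' hlt)
    refine ⟨prep (-z) 2 (prep d₁ 2 η₂), prep_mem hdD h0D (prep_mem hd₁D h0D hη₂),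
      ⟨2 + (2 + ℓ), prep_bound (by omega) (prep_bound (by omega) hb₂)⟩,
      naf_prep_digit (by omega) (naf_prep_digit (by omega) hnaf₂), ?_⟩
    rw [tsum_prep (by omega) (ℓ := 2 + ℓ) (prep_bound (by omega) hb₂),
      tsum_prep (by omega) hb₂, ← hsum₂]
    linear_combination heq + τ^2 * heq₁
  · have h2x : 2*x = τ^2*x₁ := by linear_combination heq₁ + hd₁x
    have hx₁z : x₁ = -z := by
      linear_combination (1/2)*h2z + (τ^2/4)*h2x + (x₁/4)*hτ4
    refine ⟨prep (-z) 2 (prep d₁ 2 (prep (-z) 2 (fun _ => 0))),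
      prep_mem hdD h0D (prep_mem hd₁D h0D (prep_mem hdD h0D (fun _ => h0D))),
      ⟨2 + (2 + (2 + 0)), prep_bound (by omega) (prep_bound (by omega)
        (prep_bound (by omega) (fun _ _ => rfl)))⟩,
      naf_prep_digit (by omega) (naf_prep_digit (by omega)
        (naf_prep_digit (by omega) zero_naf)), ?_⟩
    rw [tsum_prep (by omega) (ℓ := 2 + (2 + 0))
        (prep_bound (by omega) (prep_bound (by omega) (fun _ _ => rfl))),
      tsum_prep (by omega) (ℓ := 2 + 0) (prep_bound (by omega) (fun _ _ => rfl)),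
      tsum_prep (by omega) (ℓ := 0) (fun _ _ => rfl)]
    have hs0 : ∑' j:ℕ, (fun _ => (0:ℂ)) j * τ^j = 0 := by simp
    rw [hs0]
    linear_combination heq + τ^2*heq₁ + τ^4*hx₁z


lemma naf_exists
    (hτq : τ ^ 2 - (p : ℂ) * τ + (q : ℂ) = 0) (hdisc : p ^ 2 < 4 * q)
    (hq2 : 2 ≤ q) (hw : 2 ≤ w) (hτ0 : τ ≠ 0)
    (h0D : (0:ℂ) ∈ D)
    (hDA : ∀ d ∈ D, d ∈ Algebra.adjoin ℤ ({τ} : Set ℂ))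
    (hdigit : ∀ z ∈ Algebra.adjoin ℤ ({τ} : Set ℂ),
      (¬ ∃ x ∈ Algebra.adjoin ℤ ({τ} : Set ℂ), z = τ * x) →
      ∃ d ∈ D, ∃ x ∈ Algebra.adjoin ℤ ({τ} : Set ℂ), z - d = τ ^ w * x)
    (hmin : ∀ d ∈ D, d ≠ 0 → ∀ ξ ∈ Algebra.adjoin ℤ ({τ} : Set ℂ),
      (∃ x ∈ Algebra.adjoin ℤ ({τ} : Set ℂ), ξ - d = τ ^ w * x) →
      ‖d‖ ≤ ‖ξ‖) :
    ∀ n : ℕ, ∀ z ∈ Algebra.adjoin ℤ ({τ} : Set ℂ), normSq z < (n:ℝ) →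
      ∃ η : ℕ → ℂ, (∀ j, η j ∈ D) ∧ (∃ ℓ : ℕ, ∀ j, ℓ ≤ j → η j = 0) ∧ IsNAF w η ∧
        z = ∑' j : ℕ, η j * τ ^ j := by
  have hnsτ : normSq τ = (q:ℝ) := hnormSqτ hτq hdisc
  have hq1 : (1:ℝ) < (q:ℝ) := by exact_mod_cast lt_of_lt_of_le one_lt_two hq2
  intro n
  induction n with
  | zero =>
    intro z _ hlt
    exact absurd hlt (not_lt.mpr (by simpa using normSq_nonneg z))
  | succ n ih =>
    intro z hz hlt
    rw [Nat.cast_succ] at hlt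
    by_cases hz0 : z = 0
    · exact ⟨fun _ => 0, fun _ => h0D, ⟨0, fun _ _ => rfl⟩, zero_naf, by simp [hz0]⟩
    by_cases hdiv : ∃ x ∈ Algebra.adjoin ℤ ({τ} : Set ℂ), z = τ * x
    · obtain ⟨x, hx, hzx⟩ := hdiv
      have hx0 : x ≠ 0 := fun h => hz0 (by rw [hzx, h, mul_zero])
      have hlt' : normSq x < normSq z := by
        rw [hzx, normSq_mul, hnsτ]
        nlinarith [normSq_pos.mpr hx0]
      obtain ⟨η₁, hη₁, ⟨ℓ, hb₁⟩, hnaf₁, hsum₁⟩ :=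
        ih x hx (gap_aux hτq hdisc hx hz hlt' hlt)
      refine ⟨prep 0 1 η₁, prep_mem h0D h0D hη₁, ⟨1 + ℓ, prep_bound le_rfl hb₁⟩,
        naf_prep_zero hnaf₁, ?_⟩
      rw [tsum_prep le_rfl hb₁, ← hsum₁, pow_one, hzx]
      ring
    · obtain ⟨d, hdD, x, hx, heq⟩ := hdigit z hz hdiv
      rcases keyD hτq hdisc hq2 hw hmin z hz hz0 hdiv d hdD x hx heq with hlt1 | ⟨hqq, hww, hdz⟩
      · obtain ⟨η₁, hη₁, ⟨ℓ, hb₁⟩, hnaf₁, hsum₁⟩ :=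
          ih x hx (gap_aux hτq hdisc hx hz hlt1 hlt)
        refine ⟨prep d w η₁, prep_mem hdD h0D hη₁, ⟨w + ℓ, prep_bound (by omega) hb₁⟩,
          naf_prep_digit (by omega) hnaf₁, ?_⟩
        rw [tsum_prep (by omega) hb₁, ← hsum₁]
        linear_combination heq
      · subst hqq hww hdz
        have hτq2 : τ^2 - (p:ℂ)*τ + 2 = 0 := by push_cast at hτq; exact hτq
        have h2z : 2*z = τ^2 * x := by linear_combination heq
        obtain ⟨a, b, hab⟩ := coords hτq z hz
        obtain ⟨c, e, hce⟩ := coords hτq x hx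
        have ha_odd : ¬ (2:ℤ) ∣ a := by
          intro hdvd
          rw [hab] at hdiv
          exact hdiv ((div_iff hτq hdisc a b).mpr hdvd)
        have h2zc : 2*((a:ℂ)+(b:ℂ)*τ) = τ^2*((c:ℂ)+(e:ℂ)*τ) := by
          rw [← hab, ← hce]; exact h2z
        have hE : ((2*a : ℤ):ℂ) + ((2*b : ℤ):ℂ)*τ
            = ((-2*c - 2*p*e : ℤ):ℂ) + ((p*c + (p^2-2)*e : ℤ):ℂ)*τ := by
          push_cast
          linear_combination h2zc + ((c:ℂ) + (e:ℂ)*τ + (p:ℂ)*(e:ℂ))*hτq2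
        obtain ⟨hE1, hE2⟩ := coord_unique (him hτq hdisc) hE
        have hpr : -2 ≤ p ∧ p ≤ 2 := by constructor <;> nlinarith [hdisc]
        have hp5 : p = -2 ∨ p = -1 ∨ p = 0 ∨ p = 1 ∨ p = 2 := by omega
        rcases hp5 with rfl | rfl | rfl | rfl | rfl
        · -- p = -2
          exact p2_case hτq hdisc hτ0 h0D hDA hdigit hmin ih z hz hz0 hdD x hx heq h2z
            hτq2 a b hab c e hce ha_odd hE1 hlt (Or.inr rfl)
        · -- p = -1 : contradiction
          exfalso; norm_num at hE1 hE2; omega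
        · -- p = 0
          have hτ2 : τ^2 = -2 := by
            norm_num at hτq2
            linear_combination hτq2
          have hxz : x = -z := by
            linear_combination (1/2)*h2z + (x/2)*hτ2
          refine ⟨prep (-z) 2 (prep (-z) 2 (fun _ => 0)),
            prep_mem hdD h0D (prep_mem hdD h0D (fun _ => h0D)),
            ⟨2 + (2 + 0), prep_bound (by omega) (prep_bound (by omega) (fun _ _ => rfl))⟩,
            naf_prep_digit (by omega) (naf_prep_digit (by omega) zero_naf), ?_⟩
          rw [tsum_prep (by omega) (ℓ := 2 + 0) (prep_bound (by omega) (fun _ _ => rfl)),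
            tsum_prep (by omega) (ℓ := 0) (fun _ _ => rfl)]
          have hs0 : ∑' j:ℕ, (fun _ => (0:ℂ)) j * τ^j = 0 := by simp
          rw [hs0]
          linear_combination heq + (τ^2)*hxz
        · -- p = 1 : contradiction
          exfalso; norm_num at hE1 hE2; omega
        · -- p = 2
          exact p2_case hτq hdisc hτ0 h0D hDA hdigit hmin ih z hz hz0 hdD x hx heq h2z
            hτq2 a b hab c e hce ha_odd hE1 hlt (Or.inl rfl)
end K


section U

variable {τ : ℂ} {w : ℕ} {D : Finset ℂ}

lemma eq_prep_of_naf {η : ℕ → ℂ} (hw : 1 ≤ w) (hnaf : IsNAF w η) (h0 : η 0 ≠ 0) :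
    η = prep (η 0) w (fun j => η (j + w)) := by
  funext j
  rcases Nat.eq_zero_or_pos j with rfl | hj
  · simp [prep]
  by_cases hjw : j < w
  · rw [hnaf 0 j hj (by omega) h0]
    simp [prep, Nat.pos_iff_ne_zero.mp hj, hjw]
  · simp only [prep, if_neg (Nat.pos_iff_ne_zero.mp hj), if_neg hjw]
    congr 1
    omega

lemma eq_prep_of_zero {η : ℕ → ℂ} (h0 : η 0 = 0) :
    η = prep 0 1 (fun j => η (j + 1)) := by
  funext j
  rcases Nat.eq_zero_or_pos j with rfl | hj
  · simpa [prep] using h0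
  · simp only [prep, if_neg (Nat.pos_iff_ne_zero.mp hj), if_neg (by omega : ¬ j < 1)]
    congr 1
    omega

lemma naf_unique
    (hτ0 : τ ≠ 0) (hw : 2 ≤ w)
    (h0D : (0:ℂ) ∈ D)
    (hDA : ∀ d ∈ D, d ∈ Algebra.adjoin ℤ ({τ} : Set ℂ))
    (hDnd : ∀ d ∈ D, d ≠ 0 → ¬ ∃ x ∈ Algebra.adjoin ℤ ({τ} : Set ℂ), d = τ * x)
    (hDuniq : ∀ d₁ ∈ D, ∀ d₂ ∈ D, d₁ ≠ 0 → d₂ ≠ 0 →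
      (∃ x ∈ Algebra.adjoin ℤ ({τ} : Set ℂ), d₁ - d₂ = τ ^ w * x) → d₁ = d₂) :
    ∀ n : ℕ, ∀ η η' : ℕ → ℂ,
      (∀ j, η j ∈ D) → (∀ j, n ≤ j → η j = 0) → IsNAF w η →
      (∀ j, η' j ∈ D) → (∀ j, n ≤ j → η' j = 0) → IsNAF w η' →
      (∑' j : ℕ, η j * τ ^ j) = (∑' j : ℕ, η' j * τ ^ j) → η = η' := by
  intro n
  induction n with
  | zero =>
    intro η η' _ hb _ _ hb' _ _
    funext j
    rw [hb j (Nat.zero_le _), hb' j (Nat.zero_le _)]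
  | succ n ih =>
    intro η η' hη hb hnaf hη' hb' hnaf' hsum
    -- mixed case as a general claim to use symmetrically
    have mixed : ∀ μ μ' : ℕ → ℂ, (∀ j, μ j ∈ D) → (∀ j, n+1 ≤ j → μ j = 0) → IsNAF w μ →
        (∀ j, μ' j ∈ D) → (∀ j, n+1 ≤ j → μ' j = 0) →
        μ 0 ≠ 0 → μ' 0 = 0 →
        (∑' j : ℕ, μ j * τ ^ j) = (∑' j : ℕ, μ' j * τ ^ j) → False := by
      intro μ μ' hμ hbμ hnafμ hμ' hbμ' h1 h2 hs
      have e : ∑' j : ℕ, μ j * τ ^ j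
          = μ 0 + τ ^ w * ∑' j : ℕ, μ (j + w) * τ ^ j := by
        conv_lhs => rw [eq_prep_of_naf (by omega) hnafμ h1]
        exact tsum_prep (by omega) (ℓ := n+1) (fun j hj => hbμ _ (by omega))
      have e' : ∑' j : ℕ, μ' j * τ ^ j
          = 0 + τ ^ 1 * ∑' j : ℕ, μ' (j + 1) * τ ^ j := by
        conv_lhs => rw [eq_prep_of_zero h2]
        exact tsum_prep (by omega) (ℓ := n+1) (fun j hj => hbμ' _ (by omega))
      have hT : (∑' j : ℕ, μ (j + w) * τ ^ j) ∈ Algebra.adjoin ℤ ({τ} : Set ℂ) :=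
        tsum_mem_adjoin hDA (fun j => hμ _) (ℓ := n+1) (fun j hj => hbμ _ (by omega))
      have hT' : (∑' j : ℕ, μ' (j + 1) * τ ^ j) ∈ Algebra.adjoin ℤ ({τ} : Set ℂ) :=
        tsum_mem_adjoin hDA (fun j => hμ' _) (ℓ := n+1) (fun j hj => hbμ' _ (by omega))
      refine hDnd (μ 0) (hμ 0) h1 ?_
      refine ⟨(∑' j : ℕ, μ' (j + 1) * τ ^ j) - τ^(w-1) * ∑' j : ℕ, μ (j + w) * τ ^ j,
        sub_mem hT' (mul_mem (Subalgebra.pow_mem _ (Algebra.self_mem_adjoin_singleton ℤ τ) _) hT), ?_⟩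
      have hw1 : τ ^ w = τ * τ ^ (w - 1) := by
        rw [← pow_succ']
        congr 1
        omega
      rw [e, e'] at hs
      rw [mul_sub]
      rw [hw1] at hs
      linear_combination hs
    by_cases h1 : η 0 = 0
    · by_cases h2 : η' 0 = 0
      · -- both zero
        have e : ∑' j : ℕ, η j * τ ^ j = 0 + τ ^ 1 * ∑' j : ℕ, η (j + 1) * τ ^ j := by
          conv_lhs => rw [eq_prep_of_zero h1]
          exact tsum_prep (by omega) (ℓ := n+1) (fun j hj => hb _ (by omega))
        have e' : ∑' j : ℕ, η' j * τ ^ j = 0 + τ ^ 1 * ∑' j : ℕ, η' (j + 1) * τ ^ j := by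
          conv_lhs => rw [eq_prep_of_zero h2]
          exact tsum_prep (by omega) (ℓ := n+1) (fun j hj => hb' _ (by omega))
        rw [e, e'] at hsum
        have hTT : (∑' j : ℕ, η (j + 1) * τ ^ j) = ∑' j : ℕ, η' (j + 1) * τ ^ j := by
          apply mul_left_cancel₀ hτ0
          linear_combination hsum
        have := ih (fun j => η (j + 1)) (fun j => η' (j + 1))
          (fun j => hη _) (fun j hj => hb _ (by omega))
          (fun i j hij hjw hi => hnaf (i+1) (j+1) (by omega) (by omega) hi)
          (fun j => hη' _) (fun j hj => hb' _ (by omega))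
          (fun i j hij hjw hi => hnaf' (i+1) (j+1) (by omega) (by omega) hi)
          hTT
        funext j
        rcases Nat.eq_zero_or_pos j with rfl | hj
        · rw [h1, h2]
        · have := congrFun this (j - 1)
          simpa [Nat.sub_add_cancel hj] using this
      · exact absurd (mixed η' η hη' hb' hnaf' hη hb h2 h1 hsum.symm) id
    · by_cases h2 : η' 0 = 0
      · exact absurd (mixed η η' hη hb hnaf hη' hb' h1 h2 hsum) id
      · -- both nonzero
        have e : ∑' j : ℕ, η j * τ ^ j
            = η 0 + τ ^ w * ∑' j : ℕ, η (j + w) * τ ^ j := by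
          conv_lhs => rw [eq_prep_of_naf (by omega) hnaf h1]
          exact tsum_prep (by omega) (ℓ := n+1) (fun j hj => hb _ (by omega))
        have e' : ∑' j : ℕ, η' j * τ ^ j
            = η' 0 + τ ^ w * ∑' j : ℕ, η' (j + w) * τ ^ j := by
          conv_lhs => rw [eq_prep_of_naf (by omega) hnaf' h2]
          exact tsum_prep (by omega) (ℓ := n+1) (fun j hj => hb' _ (by omega))
        rw [e, e'] at hsum
        have hT : (∑' j : ℕ, η (j + w) * τ ^ j) ∈ Algebra.adjoin ℤ ({τ} : Set ℂ) :=
          tsum_mem_adjoin hDA (fun j => hη _) (ℓ := n+1) (fun j hj => hb _ (by omega))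
        have hT' : (∑' j : ℕ, η' (j + w) * τ ^ j) ∈ Algebra.adjoin ℤ ({τ} : Set ℂ) :=
          tsum_mem_adjoin hDA (fun j => hη' _) (ℓ := n+1) (fun j hj => hb' _ (by omega))
        have hd0 : η 0 = η' 0 := by
          refine hDuniq _ (hη 0) _ (hη' 0) h1 h2 ?_
          exact ⟨_, sub_mem hT' hT, by linear_combination hsum⟩
        have hτw : (τ:ℂ) ^ w ≠ 0 := pow_ne_zero _ hτ0
        have hTT : (∑' j : ℕ, η (j + w) * τ ^ j) = ∑' j : ℕ, η' (j + w) * τ ^ j := by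
          apply mul_left_cancel₀ hτw
          rw [hd0] at hsum
          linear_combination hsum
        have heq := ih (fun j => η (j + w)) (fun j => η' (j + w))
          (fun j => hη _) (fun j hj => hb _ (by omega))
          (fun i j hij hjw hi => hnaf (i+w) (j+w) (by omega) (by omega) hi)
          (fun j => hη' _) (fun j hj => hb' _ (by omega))
          (fun i j hij hjw hi => hnaf' (i+w) (j+w) (by omega) (by omega) hi)
          hTT
        funext j
        rcases Nat.eq_zero_or_pos j with rfl | hj
        · exact hd0
        by_cases hjw : j < w
        · rw [hnaf 0 j hj (by omega) h1, hnaf' 0 j hj (by omega) h2]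
        · have := congrFun heq (j - w)
          simpa [Nat.sub_add_cancel (by omega : w ≤ j)] using this

end U


/-- **Existence and uniqueness of `w`-NAFs for lattice points.** Let `τ` be an imaginary
quadratic algebraic integer with `|τ| > 1`, `w ≥ 2`, and `D` the minimal norm
representatives digit set modulo `τ^w`. Then every `z ∈ ℤ[τ]` admits a unique finite
`w`-NAF expansion `z = ∑_j η_j τ^j`, i.e. `D` is a width-`w` non-adjacent digit set. -/
theorem wNAF_exists_unique (p q : ℤ) (τ : ℂ)
    (hτq : τ ^ 2 - (p : ℂ) * τ + (q : ℂ) = 0) (hdisc : p ^ 2 < 4 * q)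
    (habs : 1 < ‖τ‖) (w : ℕ) (hw : 2 ≤ w)
    (D : Finset ℂ) (hD : IsMinimalNormDigitSet τ w D) :
    ∀ z ∈ Algebra.adjoin ℤ ({τ} : Set ℂ),
      ∃! η : ℕ → ℂ,
        (∀ j, η j ∈ D) ∧ (∃ ℓ : ℕ, ∀ j, ℓ ≤ j → η j = 0) ∧
        (∀ i j : ℕ, i < j → j < i + w → η i ≠ 0 → η j = 0) ∧
        z = ∑' j : ℕ, η j * τ ^ j := by
  obtain ⟨⟨h0D, hDA, hDnd, hDuniq, hdigit⟩, hmin⟩ := hD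
  have hτ0 : τ ≠ 0 := by
    intro h
    rw [h, norm_zero] at habs
    exact absurd habs (by norm_num)
  have hq2 : 2 ≤ q := by
    have h1 : Complex.normSq τ = (q:ℝ) := hnormSqτ hτq hdisc
    have h2 : 1 < Complex.normSq τ := by
      rw [← Complex.sq_norm]
      nlinarith [habs]
    rw [h1] at h2
    have : (1:ℤ) < q := by exact_mod_cast h2
    omega
  intro z hz
  obtain ⟨k, hk⟩ := normSq_int hτq hdisc z hz
  have hk0 : 0 ≤ k := by
    have h := Complex.normSq_nonneg z
    rw [hk] at h
    exact_mod_cast h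
  have hlt : Complex.normSq z < ((k.toNat + 1 : ℕ):ℝ) := by
    rw [hk]
    have h2 : k < (k.toNat:ℤ) + 1 := by omega
    exact_mod_cast h2
  obtain ⟨η, hη, ⟨ℓ, hb⟩, hnaf, hsum⟩ :=
    naf_exists hτq hdisc hq2 hw hτ0 h0D hDA hdigit hmin (k.toNat+1) z hz hlt
  refine ⟨η, ⟨hη, ⟨ℓ, hb⟩, hnaf, hsum⟩, ?_⟩
  rintro η' ⟨hη', ⟨ℓ', hb'⟩, hnaf', hsum'⟩
  exact naf_unique hτ0 hw h0D hDA hDnd hDuniq (max ℓ' ℓ) η' η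
    hη' (fun j hj => hb' j (le_trans (le_max_left _ _) hj)) hnaf'
    hη (fun j hj => hb j (le_trans (le_max_right _ _) hj)) hnaf
    (by rw [← hsum', ← hsum])
end Seq
end Base
end

section
/- Let Λ ⊂ C be a lattice with Voronoi cell V of 0, and let U ⊆ C be a bounded set whose boundary consists of finitely many rectifiable curves. Then the number of Voronoi cells of Λ needed to cover the boundary of NU is O(|N|) as N → ∞ in C; in particular the number of lattice points of Λ in NU equals |N|²·λ(U)/λ(V) + O(|N|). -/
open Complex Set Metric MeasureTheory
open scoped ENNReal NNReal

noncomputable section VoronoiAux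




def lat (τ : ℂ) : Set ℂ := {z : ℂ | ∃ a b : ℤ, z = (a : ℂ) + (b : ℂ) * τ}

def vcell (τ : ℂ) : Set ℂ :=
  {v : ℂ | ∀ a b : ℤ, norm v ≤ norm (v - ((a : ℂ) + (b : ℂ) * τ))}

lemma im_ne {p q : ℤ} {τ : ℂ} (hτq : τ ^ 2 - (p : ℂ) * τ + (q : ℂ) = 0)
    (hdisc : p ^ 2 < 4 * q) : τ.im ≠ 0 := by
  intro h
  have h1 : (τ ^ 2 - (p : ℂ) * τ + (q : ℂ)).re = 0 := by rw [hτq]; rfl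
  have hd : (p : ℝ) ^ 2 < 4 * q := by exact_mod_cast hdisc
  simp only [Complex.add_re, Complex.sub_re, pow_two, Complex.mul_re, h, mul_zero, zero_mul,
    sub_zero, Complex.ofReal_re, Complex.intCast_re, Complex.intCast_im, Complex.ofReal_im] at h1
  nlinarith [sq_nonneg (2 * τ.re - p), h1]

lemma lat_sub {τ : ℂ} {z w : ℂ} (hz : z ∈ lat τ) (hw : w ∈ lat τ) : z - w ∈ lat τ := by
  obtain ⟨a, b, rfl⟩ := hz; obtain ⟨c, d, rfl⟩ := hw
  exact ⟨a - c, b - d, by push_cast; ring⟩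

lemma lat_zero (τ : ℂ) : (0 : ℂ) ∈ lat τ := ⟨0, 0, by simp⟩

/-- separation -/
lemma lat_sep {τ : ℂ} (him : τ.im ≠ 0) {z : ℂ} (hz : z ∈ lat τ) (h0 : z ≠ 0) :
    min 1 |τ.im| ≤ norm z := by
  obtain ⟨a, b, rfl⟩ := hz
  rcases eq_or_ne b 0 with hb | hb
  · subst hb
    simp only [Int.cast_zero, zero_mul, add_zero] at h0 ⊢
    have ha : a ≠ 0 := by simpa using h0
    have : (1 : ℝ) ≤ |(a : ℝ)| := by exact_mod_cast Int.one_le_abs (by simpa using ha)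
    calc min 1 |τ.im| ≤ 1 := min_le_left _ _
      _ ≤ |(a : ℝ)| := this
      _ = norm ((a : ℤ) : ℂ) := by rw [Complex.norm_intCast]
  · have him' : |((a:ℂ) + b * τ).im| = |(b:ℝ)| * |τ.im| := by
      simp [Complex.add_im, Complex.mul_im]
    have h1 : (1:ℝ) ≤ |(b:ℝ)| := by exact_mod_cast Int.one_le_abs (by simpa using hb)
    calc min 1 |τ.im| ≤ |τ.im| := min_le_right _ _
      _ ≤ |(b:ℝ)| * |τ.im| := le_mul_of_one_le_left (abs_nonneg _) h1
      _ = |((a:ℂ) + b * τ).im| := him'.symm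
      _ ≤ norm _ := Complex.abs_im_le_norm _

/-- rounding: every point is within (1+|τ|)/2 of a lattice point -/
lemma lat_cover {τ : ℂ} (him : τ.im ≠ 0) (z : ℂ) :
    ∃ w ∈ lat τ, norm (z - w) ≤ (1 + norm τ) / 2 := by
  set y : ℝ := z.im / τ.im with hy
  set x : ℝ := z.re - y * τ.re with hx
  have hz : z = (x : ℂ) + (y : ℂ) * τ := by
    apply Complex.ext <;> simp [hx, hy]
    field_simp
  refine ⟨(round x : ℂ) + (round y : ℂ) * τ, ⟨round x, round y, rfl⟩, ?_⟩
  have : z - ((round x : ℂ) + (round y : ℂ) * τ)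
      = ((x - round x : ℝ) : ℂ) + ((y - round y : ℝ) : ℂ) * τ := by
    rw [hz]; push_cast; ring
  rw [this]
  calc norm _ ≤ norm ((x - round x : ℝ) : ℂ)
        + norm (((y - round y : ℝ) : ℂ) * τ) := norm_add_le _ _
    _ = |x - round x| + |y - round y| * norm τ := by
        rw [norm_mul, Complex.norm_real, Complex.norm_real, Real.norm_eq_abs, Real.norm_eq_abs]
    _ ≤ 1/2 + 1/2 * norm τ := by
        gcongr
        · exact (abs_sub_round x)
        · exact (abs_sub_round y)
    _ = (1 + norm τ) / 2 := by ring




/-- finiteness of lattice points in a bounded set -/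
lemma lat_inter_finite (him : τ.im ≠ 0) {K : Set ℂ} (hK : Bornology.IsBounded K) :
    (lat τ ∩ K).Finite := by
  obtain ⟨ρ, hρ⟩ := hK.subset_closedBall 0
  set M : ℤ := ⌈ρ / |τ.im|⌉ with hM
  set M' : ℤ := ⌈ρ + M * |τ.re|⌉ with hM'
  have : lat τ ∩ K ⊆ (fun ab : ℤ × ℤ => ((ab.1 : ℂ) + (ab.2 : ℂ) * τ)) ''
      ((Set.Icc (-M') M') ×ˢ (Set.Icc (-M) M)) := by
    rintro z ⟨⟨a, b, rfl⟩, hzK⟩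
    have habs : norm ((a:ℂ) + b * τ) ≤ ρ := by
      simpa [Complex.dist_eq] using hρ hzK
    have him2 : |((a:ℂ) + b * τ).im| ≤ ρ := le_trans (Complex.abs_im_le_norm _) habs
    have hre2 : |((a:ℂ) + b * τ).re| ≤ ρ := le_trans (Complex.abs_re_le_norm _) habs
    have him3 : |(b:ℝ)| * |τ.im| ≤ ρ := by
      calc |(b:ℝ)| * |τ.im| = |((a:ℂ) + b * τ).im| := by
            rw [← abs_mul]; simp [Complex.add_im, Complex.mul_im]
        _ ≤ ρ := him2
    have hb : |(b:ℝ)| ≤ M :=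
      calc |(b:ℝ)| ≤ ρ / |τ.im| := (le_div_iff₀ (abs_pos.mpr him)).mpr him3
        _ ≤ M := Int.le_ceil _
    have ha : |(a:ℝ)| ≤ M' := by
      have hre : ((a:ℂ) + b * τ).re = a + b * τ.re := by simp [Complex.add_re, Complex.mul_re]
      have h4 : |(a:ℝ)| ≤ |(a:ℝ) + b * τ.re| + |(b:ℝ) * τ.re| := by
        have := abs_add_le ((a:ℝ) + b * τ.re) (-((b:ℝ) * τ.re))
        simpa using this
      have h5 : |(b:ℝ) * τ.re| ≤ M * |τ.re| := by
        rw [abs_mul]; exact mul_le_mul_of_nonneg_right hb (abs_nonneg _)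
      have h6 : ρ + M * |τ.re| ≤ M' := Int.le_ceil _
      rw [hre] at hre2
      linarith
    refine ⟨(a, b), ⟨?_, ?_⟩, rfl⟩
    · rw [Set.mem_Icc]
      have := abs_le.mp ha
      constructor <;> (rw [← @Int.cast_le ℝ]; push_cast; cases this; linarith)
    · rw [Set.mem_Icc]
      have := abs_le.mp hb
      constructor <;> (rw [← @Int.cast_le ℝ]; push_cast; cases this; linarith)
  exact Set.Finite.subset (Set.Finite.image _ (Set.finite_Icc _ _ |>.prod (Set.finite_Icc _ _))) this




lemma vcell_mem_iff {v : ℂ} : v ∈ vcell τ ↔ ∀ w ∈ lat τ, norm v ≤ norm (v - w) := by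
  constructor
  · rintro h w ⟨a, b, rfl⟩; exact h a b
  · intro h a b; exact h _ ⟨a, b, rfl⟩

lemma zero_mem_vcell : (0 : ℂ) ∈ vcell τ := by
  intro a b; simp

lemma isClosed_vcell : IsClosed (vcell τ) := by
  have : vcell τ = ⋂ (a : ℤ), ⋂ (b : ℤ),
      {v : ℂ | norm v ≤ norm (v - ((a : ℂ) + (b : ℂ) * τ))} := by
    ext v; simp [vcell, Set.mem_iInter]
  rw [this]
  refine isClosed_iInter fun a => isClosed_iInter fun b => isClosed_le ?_ ?_
  · exact continuous_norm
  · exact continuous_norm.comp (continuous_id.sub continuous_const)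

lemma halfspace_eq (w : ℂ) :
    {v : ℂ | norm v ≤ norm (v - w)}
      = {v : ℂ | v.re * w.re + v.im * w.im ≤ Complex.normSq w / 2} := by
  ext v
  have h1 : norm v ≤ norm (v - w) ↔ Complex.normSq v ≤ Complex.normSq (v - w) := by
    constructor
    · intro h
      rw [← Complex.sq_norm, ← Complex.sq_norm]
      exact pow_le_pow_left₀ (norm_nonneg _) h 2
    · intro h
      rw [Complex.norm_def, Complex.norm_def]
      exact Real.sqrt_le_sqrt h
  have h2 : Complex.normSq (v - w) = Complex.normSq v - 2*(v.re * w.re + v.im * w.im) + Complex.normSq w := by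
    simp [Complex.normSq_apply, Complex.sub_re, Complex.sub_im]; ring
  simp only [Set.mem_setOf_eq, h1, h2]
  constructor <;> intro h <;> linarith

lemma convex_vcell : Convex ℝ (vcell τ) := by
  have : vcell τ = ⋂ (a : ℤ), ⋂ (b : ℤ),
      {v : ℂ | norm v ≤ norm (v - ((a : ℂ) + (b : ℂ) * τ))} := by
    ext v; simp [vcell, Set.mem_iInter]
  rw [this]
  refine convex_iInter fun a => convex_iInter fun b => ?_
  rw [halfspace_eq]
  set w : ℂ := (a : ℂ) + (b : ℂ) * τ
  exact convex_halfSpace_le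
    ⟨fun x y => by simp [Complex.add_re, Complex.add_im]; ring,
     fun c x => by simp [Complex.real_smul, Complex.mul_re, Complex.mul_im]; ring⟩ _

lemma vcell_subset (him : τ.im ≠ 0) : vcell τ ⊆ closedBall 0 ((1 + norm τ) / 2) := by
  intro v hv
  obtain ⟨w, hw, hww⟩ : ∃ w ∈ lat τ, norm (v - w) ≤ (1 + norm τ) / 2 :=
    lat_cover him v
  rw [Metric.mem_closedBall, dist_zero_right]
  calc ‖v‖ = norm v := rfl
    _ ≤ norm (v - w) := vcell_mem_iff.mp hv w hw
    _ ≤ _ := hww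

lemma ball_subset_vcell (him : τ.im ≠ 0) :
    ball 0 (min 1 |τ.im| / 2) ⊆ vcell τ := by
  intro v hv
  rw [Metric.mem_ball, dist_zero_right] at hv
  rw [vcell_mem_iff]
  intro w hw
  rcases eq_or_ne w 0 with rfl | hw0
  · simp
  · have hsep : min 1 |τ.im| ≤ norm w := lat_sep him hw hw0
    have : norm v < min 1 |τ.im| / 2 := hv
    calc norm v ≤ min 1 |τ.im| / 2 := le_of_lt this
      _ ≤ norm w - norm v := by linarith
      _ ≤ norm (v - w) := by
          have h2 := norm_sub_norm_le w v
          rw [norm_sub_rev w v] at h2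
          linarith

/-- existence of a nearest lattice point -/
lemma exists_nearest (him : τ.im ≠ 0) (x : ℂ) : ∃ z ∈ lat τ, x - z ∈ vcell τ := by
  set R : ℝ := (1 + norm τ) / 2 with hR
  obtain ⟨w₀, hw₀, hw₀d⟩ : ∃ w ∈ lat τ, norm (x - w) ≤ R := lat_cover him x
  set F : Set ℂ := lat τ ∩ closedBall x R with hF
  have hFfin : F.Finite := lat_inter_finite him Metric.isBounded_closedBall
  have hFne : F.Nonempty := ⟨w₀, hw₀, by
    rw [Metric.mem_closedBall, Complex.dist_eq]
    rwa [norm_sub_rev] ⟩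
  obtain ⟨z, hzF, hzmin⟩ := Set.exists_min_image F (fun z => norm (x - z)) hFfin hFne
  refine ⟨z, hzF.1, ?_⟩
  rw [vcell_mem_iff]
  intro w hw
  have hlatsum : z + w ∈ lat τ := by
    obtain ⟨a, b, rfl⟩ := hzF.1; obtain ⟨c, d, rfl⟩ := hw
    exact ⟨a + c, b + d, by push_cast; ring⟩
  have key : norm (x - z) ≤ norm (x - (z + w)) := by
    by_cases hmem : z + w ∈ F
    · exact hzmin _ hmem
    · have : ¬ (z + w ∈ closedBall x R) := fun hc => hmem ⟨hlatsum, hc⟩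
      rw [Metric.mem_closedBall, Complex.dist_eq] at this
      push_neg at this
      have h1 : norm (x - z) ≤ R := by
        have := hzF.2; rw [Metric.mem_closedBall, Complex.dist_eq] at this
        rwa [norm_sub_rev] at this
      have h2 : norm (x - (z+w)) = norm ((z+w) - x) := norm_sub_rev _ _
      linarith [this]
  calc norm (x - z) ≤ norm (x - (z + w)) := key
    _ = norm (x - z - w) := by ring_nf


lemma bv_step {f : ℝ → ℂ} (hf : ContinuousOn f (Set.Icc 0 1)) {ε : ℝ} (hε : 0 < ε)
    {a : ℝ} (ha : a ∈ Set.Icc (0:ℝ) 1) :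
    (f '' Set.Icc a 1 ⊆ closedBall (f a) ε ∪ closedBall (f 1) ε) ∨
    (∃ T, T ∈ Set.Icc a 1 ∧ T < 1 ∧ ENNReal.ofReal ε ≤ eVariationOn f (Set.Icc a T) ∧
      f '' Set.Ico a T ⊆ closedBall (f a) ε) := by
  set S : Set ℝ := {t | t ∈ Set.Icc a 1 ∧ ∀ u ∈ Set.Icc a t, dist (f u) (f a) ≤ ε} with hS
  have haS : a ∈ S := ⟨⟨le_rfl, ha.2⟩, fun u hu => by
    have : u = a := le_antisymm hu.2 hu.1
    simp [this, hε.le]⟩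
  have hSne : S.Nonempty := ⟨a, haS⟩
  have hSbdd : BddAbove S := ⟨1, fun t ht => ht.1.2⟩
  set T := sSup S with hT
  have haT : a ≤ T := le_csSup hSbdd haS
  have hT1 : T ≤ 1 := csSup_le hSne fun t ht => ht.1.2
  have claim1 : ∀ u, a ≤ u → u < T → dist (f u) (f a) ≤ ε := by
    intro u hau huT
    obtain ⟨t, htS, hut⟩ := exists_lt_of_lt_csSup hSne huT
    exact htS.2 u ⟨hau, hut.le⟩
  rcases eq_or_lt_of_le hT1 with hTeq | hTlt
  · left
    rintro _ ⟨u, hu, rfl⟩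
    rcases eq_or_lt_of_le hu.2 with h1 | h1
    · right; simp [h1, hε.le]
    · left
      rw [mem_closedBall]
      exact claim1 u hu.1 (by rw [← hTeq] at h1; exact h1)
  · right
    have hTmem : T ∈ Set.Icc (0:ℝ) 1 := ⟨le_trans ha.1 haT, hT1⟩
    have hseq : ∀ k : ℕ, ∃ u, u ∈ Set.Icc (0:ℝ) 1 ∧ T ≤ u ∧ u - T ≤ 1/(k+1) ∧
        ε ≤ dist (f u) (f a) := by
      intro k
      set t := min (T + 1/((k:ℝ)+1)) 1 with ht
      have h1k : (0:ℝ) < 1/((k:ℝ)+1) := by positivity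
      have hTt : T < t := lt_min (by linarith) hTlt
      have htI : t ∈ Set.Icc a 1 := ⟨le_trans haT hTt.le, min_le_right _ _⟩
      have htnS : t ∉ S := fun h => absurd (le_csSup hSbdd h) (not_le.mpr hTt)
      have hex : ∃ u ∈ Set.Icc a t, ε < dist (f u) (f a) := by
        by_contra hcon
        push_neg at hcon
        exact htnS ⟨htI, hcon⟩
      obtain ⟨u, huI, hugt⟩ := hex
      have hTu : T ≤ u := by
        by_contra hc
        push_neg at hc
        exact absurd (claim1 u huI.1 hc) (not_le.mpr hugt)
      refine ⟨u, ⟨le_trans ha.1 huI.1, le_trans huI.2 (min_le_right _ _)⟩, hTu, ?_, hugt.le⟩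
      have := le_trans huI.2 (min_le_left _ _)
      linarith
    choose u hu1 hu2 hu3 hu4 using hseq
    have hulim : Filter.Tendsto u Filter.atTop (nhds T) := by
      have h0 : Filter.Tendsto (fun k : ℕ => T + 1/((k:ℝ)+1)) Filter.atTop (nhds (T + 0)) :=
        Filter.Tendsto.const_add _ tendsto_one_div_add_atTop_nhds_zero_nat
      rw [add_zero] at h0
      refine tendsto_of_tendsto_of_tendsto_of_le_of_le tendsto_const_nhds h0 ?_ ?_
      · exact fun k => hu2 k
      · intro k; linarith [hu3 k]
    have hflim : Filter.Tendsto (fun k => f (u k)) Filter.atTop (nhds (f T)) := by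
      have h1 := (hf T hTmem).tendsto
      exact h1.comp (tendsto_nhdsWithin_of_tendsto_nhds_of_eventually_within u hulim
        (Filter.Eventually.of_forall hu1))
    have hdlim : Filter.Tendsto (fun k => dist (f (u k)) (f a)) Filter.atTop
        (nhds (dist (f T) (f a))) := hflim.dist tendsto_const_nhds
    have claim2 : ε ≤ dist (f T) (f a) := ge_of_tendsto hdlim (Filter.Eventually.of_forall hu4)
    refine ⟨T, ⟨haT, hT1⟩, hTlt, ?_, ?_⟩
    · calc ENNReal.ofReal ε ≤ ENNReal.ofReal (dist (f T) (f a)) :=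
          ENNReal.ofReal_le_ofReal claim2
        _ = edist (f T) (f a) := (edist_dist _ _).symm
        _ ≤ eVariationOn f (Set.Icc a T) :=
          eVariationOn.edist_le f ⟨haT, le_refl T⟩ ⟨le_refl a, haT⟩
    · rintro _ ⟨v, hv, rfl⟩
      rw [mem_closedBall]
      exact claim1 v hv.1 hv.2

lemma bv_cover {f : ℝ → ℂ} (hf : ContinuousOn f (Set.Icc 0 1)) {ε : ℝ} (hε : 0 < ε) :
    ∀ n : ℕ, ∀ a, a ∈ Set.Icc (0:ℝ) 1 →
      eVariationOn f (Set.Icc a 1) ≤ n * ENNReal.ofReal ε →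
      ∃ C : Finset ℂ, C.card ≤ n + 2 ∧ f '' Set.Icc a 1 ⊆ ⋃ x ∈ C, closedBall x ε := by
  intro n
  induction n with
  | zero =>
    intro a ha hvar
    rcases bv_step hf hε ha with hcov | ⟨T, hTm, hT1, hlow, _⟩
    · refine ⟨{f a, f 1}, le_trans (Finset.card_insert_le _ _) (by simp), ?_⟩
      intro x hx
      rcases hcov hx with h | h <;> simp only [Set.mem_iUnion, Finset.mem_insert,
        Finset.mem_singleton, exists_prop]
      · exact ⟨f a, Or.inl rfl, h⟩
      · exact ⟨f 1, Or.inr rfl, h⟩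
    · exfalso
      have hmono : eVariationOn f (Set.Icc a T) ≤ eVariationOn f (Set.Icc a 1) :=
        eVariationOn.mono f (Set.Icc_subset_Icc le_rfl hTm.2)
      have : ENNReal.ofReal ε ≤ 0 := le_trans hlow (le_trans hmono (by simpa using hvar))
      rw [le_zero_iff, ENNReal.ofReal_eq_zero] at this
      linarith
  | succ n ih =>
    intro a ha hvar
    rcases bv_step hf hε ha with hcov | ⟨T, hTm, hT1, hlow, hcov⟩
    · refine ⟨{f a, f 1}, le_trans (Finset.card_insert_le _ _) (by simp), ?_⟩
      intro x hx
      rcases hcov hx with h | h <;> simp only [Set.mem_iUnion, Finset.mem_insert,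
        Finset.mem_singleton, exists_prop]
      · exact ⟨f a, Or.inl rfl, h⟩
      · exact ⟨f 1, Or.inr rfl, h⟩
    · have hsplit : eVariationOn f (Set.Icc a T) + eVariationOn f (Set.Icc T 1)
          = eVariationOn f (Set.Icc a 1) := by
        have h := eVariationOn.Icc_add_Icc f (s := Set.Icc a 1) hTm.1 hTm.2 hTm
        simp only [Set.Icc_inter_Icc, max_self, min_self, min_eq_right hTm.2,
          max_eq_right hTm.1] at h
        exact h
      have hrem : eVariationOn f (Set.Icc T 1) ≤ n * ENNReal.ofReal ε := by
        have h1 : ENNReal.ofReal ε + eVariationOn f (Set.Icc T 1)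
            ≤ ENNReal.ofReal ε + n * ENNReal.ofReal ε := by
          calc ENNReal.ofReal ε + eVariationOn f (Set.Icc T 1)
              ≤ eVariationOn f (Set.Icc a T) + eVariationOn f (Set.Icc T 1) :=
                add_le_add hlow le_rfl
            _ = eVariationOn f (Set.Icc a 1) := hsplit
            _ ≤ (n + 1 : ℕ) * ENNReal.ofReal ε := hvar
            _ = ENNReal.ofReal ε + n * ENNReal.ofReal ε := by
                push_cast
                ring
        exact (ENNReal.add_le_add_iff_left ENNReal.ofReal_ne_top).mp h1
      obtain ⟨C', hC'card, hC'cov⟩ := ih T ⟨le_trans ha.1 hTm.1, hTm.2⟩ hrem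
      refine ⟨insert (f a) C', le_trans (Finset.card_insert_le _ _) (by omega), ?_⟩
      rintro _ ⟨v, hv, rfl⟩
      rcases lt_or_ge v T with hvT | hvT
      · simp only [Set.mem_iUnion, Finset.mem_insert, exists_prop]
        exact ⟨f a, Or.inl rfl, hcov ⟨v, ⟨hv.1, hvT⟩, rfl⟩⟩
      · have := hC'cov ⟨v, ⟨hvT, hv.2⟩, rfl⟩
        simp only [Set.mem_iUnion, exists_prop] at this ⊢
        obtain ⟨x, hx, hxb⟩ := this
        exact ⟨x, Finset.mem_insert_of_mem hx, hxb⟩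

lemma bv_cover' {f : ℝ → ℂ} (hf : ContinuousOn f (Set.Icc 0 1))
    (hvar : eVariationOn f (Set.Icc 0 1) ≠ ⊤) {ε : ℝ} (hε : 0 < ε) :
    ∃ C : Finset ℂ, (C.card : ℝ) ≤ (eVariationOn f (Set.Icc 0 1)).toReal / ε + 3 ∧
      f '' Set.Icc 0 1 ⊆ ⋃ x ∈ C, closedBall x ε := by
  set ℓ : ℝ := (eVariationOn f (Set.Icc 0 1)).toReal with hℓ
  have hℓ0 : 0 ≤ ℓ := ENNReal.toReal_nonneg
  set m : ℕ := ⌈ℓ / ε⌉₊ with hm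
  have hvb : eVariationOn f (Set.Icc 0 1) ≤ m * ENNReal.ofReal ε := by
    have h1 : ℓ ≤ m * ε := by
      have := Nat.le_ceil (ℓ / ε)
      calc ℓ = (ℓ / ε) * ε := by field_simp
        _ ≤ m * ε := by gcongr
    calc eVariationOn f (Set.Icc 0 1) = ENNReal.ofReal ℓ := (ENNReal.ofReal_toReal hvar).symm
      _ ≤ ENNReal.ofReal (m * ε) := ENNReal.ofReal_le_ofReal h1
      _ = m * ENNReal.ofReal ε := by
          rw [ENNReal.ofReal_mul (by positivity), ENNReal.ofReal_natCast]
  obtain ⟨C, hCcard, hCcov⟩ := bv_cover hf hε m 0 (by simp) (by simpa using hvb)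
  refine ⟨C, ?_, hCcov⟩
  have h2 : (m : ℝ) ≤ ℓ / ε + 1 := by
    have := Nat.ceil_lt_add_one (by positivity : (0:ℝ) ≤ ℓ / ε)
    linarith
  calc (C.card : ℝ) ≤ (m : ℝ) + 2 := by exact_mod_cast hCcard
    _ ≤ ℓ / ε + 3 := by linarith

lemma lipschitz_mul_left (N : ℂ) : LipschitzWith ‖N‖₊ (fun z : ℂ => N * z) :=
  LipschitzWith.of_dist_le_mul fun x y => by
    rw [dist_eq_norm, dist_eq_norm, ← mul_sub, norm_mul]
    rfl

lemma evar_mul_le (N : ℂ) (f : ℝ → ℂ) (s : Set ℝ) :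
    eVariationOn (fun t => N * f t) s ≤ ‖N‖₊ * eVariationOn f s :=
  (LipschitzWith.lipschitzOnWith (lipschitz_mul_left N) (s := Set.univ)).comp_eVariationOn_le
    (Set.mapsTo_univ _ _)

lemma frontier_mul_image {N : ℂ} (hN : N ≠ 0) (U : Set ℂ) :
    frontier ((fun u => N * u) '' U) = (fun u => N * u) '' frontier U := by
  have := (Homeomorph.mulLeft₀ N hN).image_frontier U
  rw [Homeomorph.coe_mulLeft₀] at this
  exact this.symm

lemma curve_image_null {f : ℝ → ℂ} (hf : ContinuousOn f (Set.Icc 0 1))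
    (hvar : eVariationOn f (Set.Icc 0 1) ≠ ⊤) :
    volume (f '' Set.Icc 0 1) = 0 := by
  classical
  set ℓ : ℝ := (eVariationOn f (Set.Icc 0 1)).toReal with hℓ
  have hℓ0 : 0 ≤ ℓ := ENNReal.toReal_nonneg
  have key : ∀ ε : ℝ, 0 < ε → ε ≤ 1 →
      volume (f '' Set.Icc 0 1) ≤ ENNReal.ofReal ((ℓ + 3) * Real.pi * ε) := by
    intro ε hε hε1
    obtain ⟨C, hCcard, hCcov⟩ := bv_cover' hf hvar hε
    calc volume (f '' Set.Icc 0 1) ≤ volume (⋃ x ∈ C, closedBall x ε) := measure_mono hCcov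
      _ ≤ ∑ x ∈ C, volume (closedBall x ε) := measure_biUnion_finset_le C _
      _ = C.card • (ENNReal.ofReal ε ^ 2 * (NNReal.pi : ℝ≥0∞)) := by
          simp only [Complex.volume_closedBall]
          rw [Finset.sum_const]
      _ = (C.card : ℝ≥0∞) * ENNReal.ofReal (ε ^ 2 * Real.pi) := by
          rw [nsmul_eq_mul]
          congr 1
          rw [ENNReal.ofReal_mul (by positivity), ← ENNReal.ofReal_pow hε.le]
          congr 1
          rw [← NNReal.coe_real_pi, ENNReal.ofReal_coe_nnreal]
      _ ≤ ENNReal.ofReal (ℓ / ε + 3) * ENNReal.ofReal (ε ^ 2 * Real.pi) := by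
          gcongr
          rw [← ENNReal.ofReal_natCast]
          exact ENNReal.ofReal_le_ofReal hCcard
      _ = ENNReal.ofReal ((ℓ / ε + 3) * (ε ^ 2 * Real.pi)) := by
          rw [← ENNReal.ofReal_mul (by positivity)]
      _ ≤ ENNReal.ofReal ((ℓ + 3) * Real.pi * ε) := by
          apply ENNReal.ofReal_le_ofReal
          have h1 : (ℓ / ε + 3) * (ε ^ 2 * Real.pi) = (ℓ * ε + 3 * ε ^ 2) * Real.pi := by
            field_simp
          rw [h1]
          have h2 : ℓ * ε + 3 * ε ^ 2 ≤ (ℓ + 3) * ε := by nlinarith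
          nlinarith [Real.pi_pos]
  refine le_antisymm ?_ (by simp)
  refine ENNReal.le_of_forall_pos_le_add fun δ hδ _ => ?_
  rw [zero_add]
  set c : ℝ := (ℓ + 3) * Real.pi + 1 with hc
  have hc0 : 0 < c := by positivity
  set ε : ℝ := min 1 (δ / c) with hε
  have hε0 : 0 < ε := lt_min one_pos (by positivity)
  calc volume (f '' Set.Icc 0 1) ≤ ENNReal.ofReal ((ℓ + 3) * Real.pi * ε) :=
        key ε hε0 (min_le_left _ _)
    _ ≤ ENNReal.ofReal δ := by
        apply ENNReal.ofReal_le_ofReal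
        have h1 : ε ≤ δ / c := min_le_right _ _
        have h2 : (ℓ + 3) * Real.pi * ε ≤ (ℓ + 3) * Real.pi * (δ / c) := by
          apply mul_le_mul_of_nonneg_left h1 (by positivity)
        have h3 : (ℓ + 3) * Real.pi * (δ / c) ≤ δ := by
          rw [mul_div_assoc']
          rw [div_le_iff₀ hc0]
          have : (0:ℝ) ≤ δ := δ.2
          nlinarith
        linarith
    _ = δ := ENNReal.ofReal_coe_nnreal

/-- Uniform bound on the number of lattice points in any closed ball of radius `ρ`. -/
lemma lat_count {τ : ℂ} (him : τ.im ≠ 0) (ρ : ℝ) :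
    ∃ K : ℝ, 0 ≤ K ∧ ∀ c : ℂ, ((lat τ ∩ closedBall c ρ).ncard : ℝ) ≤ K := by
  classical
  set r : ℝ := min 1 |τ.im| / 2 with hr
  have hr0 : 0 < r := by
    have : 0 < min 1 |τ.im| := lt_min one_pos (abs_pos.mpr him)
    positivity
  refine ⟨(|ρ| + r) ^ 2 / r ^ 2, by positivity, fun c => ?_⟩
  set S : Set ℂ := lat τ ∩ closedBall c ρ with hS
  have hfin : S.Finite := lat_inter_finite him Metric.isBounded_closedBall
  set Sf : Finset ℂ := hfin.toFinset with hSf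
  have hcard : S.ncard = Sf.card := (Set.ncard_eq_toFinset_card _ hfin)
  have hdisj : (↑Sf : Set ℂ).PairwiseDisjoint (fun z => ball z r) := by
    intro z hz z' hz' hzz'
    apply Metric.ball_disjoint_ball
    have hzS : z ∈ S := by rwa [← hfin.mem_toFinset]
    have hz'S : z' ∈ S := by rwa [← hfin.mem_toFinset]
    have hsub : z - z' ∈ lat τ := lat_sub hzS.1 hz'S.1
    have hne : z - z' ≠ 0 := sub_ne_zero.mpr hzz'
    have := lat_sep him hsub hne
    rw [Complex.dist_eq]
    calc r + r = min 1 |τ.im| := by rw [hr]; ring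
      _ ≤ norm (z - z') := this
  have hmeas : ∀ z ∈ Sf, MeasurableSet (ball z r) := fun z _ => measurableSet_ball
  have hunion : volume (⋃ z ∈ Sf, ball z r) = ∑ z ∈ Sf, volume (ball z r) :=
    measure_biUnion_finset hdisj hmeas
  have hsub2 : (⋃ z ∈ Sf, ball z r) ⊆ closedBall c (|ρ| + r) := by
    intro w hw
    simp only [Set.mem_iUnion, exists_prop] at hw
    obtain ⟨z, hz, hwz⟩ := hw
    have hzS : z ∈ S := by rwa [← hfin.mem_toFinset]
    have h1 : dist z c ≤ |ρ| := le_trans hzS.2 (le_abs_self ρ)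
    rw [mem_closedBall]
    calc dist w c ≤ dist w z + dist z c := dist_triangle _ _ _
      _ ≤ r + |ρ| := add_le_add (le_of_lt hwz) h1
      _ = |ρ| + r := by ring
  have hivol : (Sf.card : ℝ≥0∞) * ENNReal.ofReal (r ^ 2 * Real.pi)
      ≤ ENNReal.ofReal ((|ρ| + r) ^ 2 * Real.pi) := by
    have hball : ∀ z : ℂ, volume (ball z r) = ENNReal.ofReal (r ^ 2 * Real.pi) := by
      intro z
      rw [Complex.volume_ball, ENNReal.ofReal_mul (by positivity), ← ENNReal.ofReal_pow hr0.le,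
        ← NNReal.coe_real_pi, ENNReal.ofReal_coe_nnreal]
    calc (Sf.card : ℝ≥0∞) * ENNReal.ofReal (r ^ 2 * Real.pi)
        = ∑ z ∈ Sf, volume (ball z r) := by
          simp only [hball, Finset.sum_const, nsmul_eq_mul]
      _ = volume (⋃ z ∈ Sf, ball z r) := hunion.symm
      _ ≤ volume (closedBall c (|ρ| + r)) := measure_mono hsub2
      _ = ENNReal.ofReal ((|ρ| + r) ^ 2 * Real.pi) := by
          rw [Complex.volume_closedBall, ENNReal.ofReal_mul (by positivity),
            ← ENNReal.ofReal_pow (by positivity), ← NNReal.coe_real_pi,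
            ENNReal.ofReal_coe_nnreal]
  have hreal : (Sf.card : ℝ) * (r ^ 2 * Real.pi) ≤ (|ρ| + r) ^ 2 * Real.pi := by
    have h1 : ((Sf.card : ℝ≥0∞) * ENNReal.ofReal (r ^ 2 * Real.pi)).toReal
        ≤ (ENNReal.ofReal ((|ρ| + r) ^ 2 * Real.pi)).toReal := by
      apply ENNReal.toReal_mono (by simp) hivol
    rwa [ENNReal.toReal_mul, ENNReal.toReal_natCast, ENNReal.toReal_ofReal (by positivity),
      ENNReal.toReal_ofReal (by positivity)] at h1
  rw [hcard]
  rw [div_eq_mul_inv, ← mul_le_mul_iff_of_pos_right (by positivity : (0:ℝ) < r ^ 2 * Real.pi)]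
  calc (Sf.card : ℝ) * (r ^ 2 * Real.pi) ≤ (|ρ| + r) ^ 2 * Real.pi := hreal
    _ = (|ρ| + r) ^ 2 * (r ^ 2)⁻¹ * (r ^ 2 * Real.pi) := by
        field_simp

def cellAt (τ z : ℂ) : Set ℂ := {w : ℂ | w - z ∈ vcell τ}

lemma mem_cellAt_self (τ z : ℂ) : z ∈ cellAt τ z := by
  show z - z ∈ vcell τ
  rw [sub_self]
  exact zero_mem_vcell

lemma mem_cellAt {τ z w : ℂ} : w ∈ cellAt τ z ↔ w - z ∈ vcell τ := Iff.rfl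

lemma cellAt_eq_image (τ z : ℂ) : cellAt τ z = (fun v => z + v) '' vcell τ := by
  ext w
  constructor
  · intro hw; exact ⟨w - z, hw, by ring⟩
  · rintro ⟨v, hv, rfl⟩; show z + v - z ∈ vcell τ; simpa using hv

lemma convex_cellAt (τ z : ℂ) : Convex ℝ (cellAt τ z) := by
  rw [cellAt_eq_image]; exact convex_vcell.translate z

lemma isClosed_cellAt (τ z : ℂ) : IsClosed (cellAt τ z) :=
  IsClosed.preimage (continuous_id.sub continuous_const) isClosed_vcell

lemma volume_cellAt (τ z : ℂ) : volume (cellAt τ z) = volume (vcell τ) := by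
  have h : cellAt τ z = (fun w => -z + w) ⁻¹' vcell τ := by
    ext w
    show w - z ∈ vcell τ ↔ -z + w ∈ vcell τ
    rw [sub_eq_neg_add, add_comm]
  rw [h]
  exact measure_preimage_add volume (-z) (vcell τ)

lemma cellAt_subset_ball {τ : ℂ} (him : τ.im ≠ 0) (z : ℂ) :
    cellAt τ z ⊆ closedBall z ((1 + norm τ) / 2) := by
  intro w hw
  have := vcell_subset him hw
  rw [mem_closedBall] at this ⊢
  rw [dist_zero_right] at this
  rwa [Complex.dist_eq]

lemma cellAt_aedisjoint {τ : ℂ} (him : τ.im ≠ 0) {z z' : ℂ} (hz : z ∈ lat τ) (hz' : z' ∈ lat τ)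
    (hne : z ≠ z') : volume (cellAt τ z ∩ cellAt τ z') = 0 := by
  have hsub : cellAt τ z ∩ cellAt τ z' ⊆ (AffineSubspace.perpBisector z z' : Set ℂ) := by
    rintro w ⟨hw, hw'⟩
    rw [SetLike.mem_coe, AffineSubspace.mem_perpBisector_iff_dist_eq]
    have h1 : norm (w - z) ≤ norm (w - z') := by
      have := vcell_mem_iff.mp hw (z' - z) (lat_sub hz' hz)
      convert this using 2
      ring
    have h2 : norm (w - z') ≤ norm (w - z) := by
      have := vcell_mem_iff.mp hw' (z - z') (lat_sub hz hz')
      convert this using 2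
      ring
    rw [Complex.dist_eq, Complex.dist_eq]
    exact le_antisymm h1 h2
  refine measure_mono_null hsub (MeasureTheory.Measure.addHaar_affineSubspace _ _ ?_)
  intro htop
  have : z ∈ AffineSubspace.perpBisector z z' := htop ▸ AffineSubspace.mem_top ℝ ℂ z
  rw [AffineSubspace.mem_perpBisector_iff_dist_eq, dist_self] at this
  exact hne (by rwa [eq_comm, dist_eq_zero] at this)

lemma cell_dichotomy {τ : ℂ} {z : ℂ} {D : Set ℂ}
    (hzB : ∀ v ∈ vcell τ, z + v ∉ frontier D) :
    cellAt τ z ⊆ interior D ∨ cellAt τ z ⊆ (closure D)ᶜ := by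
  have hnofr : ∀ w ∈ cellAt τ z, w ∉ frontier D := by
    intro w hw
    have := hzB (w - z) hw
    simpa using this
  refine IsPreconnected.subset_or_subset isOpen_interior isClosed_closure.isOpen_compl
      ?_ ?_ (convex_cellAt τ z).isPreconnected
  · exact disjoint_compl_right.mono_left interior_subset_closure
  · intro w hw
    by_cases hcl : w ∈ closure D
    · rw [closure_eq_interior_union_frontier] at hcl
      rcases hcl with h | h
      · exact Or.inl h
      · exact absurd h (hnofr w hw)
    · exact Or.inr hcl

lemma vol_biUnion_cells {τ : ℂ} (him : τ.im ≠ 0) {F : Finset ℂ} (hF : ∀ z ∈ F, z ∈ lat τ) :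
    volume (⋃ z ∈ F, cellAt τ z) = F.card * volume (vcell τ) := by
  rw [measure_biUnion_finset₀ ?_ ?_]
  · simp only [volume_cellAt, Finset.sum_const, nsmul_eq_mul]
  · intro z hz z' hz' hne
    exact cellAt_aedisjoint him (hF z hz) (hF z' hz') hne
  · exact fun z _ => (isClosed_cellAt τ z).measurableSet.nullMeasurableSet

lemma vol_mul_image (N : ℂ) (s : Set ℂ) :
    volume ((fun u => N * u) '' s) = ENNReal.ofReal (norm N ^ 2) * volume s := by
  have h1 : (fun u : ℂ => N * u) = ⇑(Algebra.lmul ℝ ℂ N) := by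
    ext u
    simp [Algebra.lmul]
  rw [h1, MeasureTheory.Measure.addHaar_image_linearMap]
  congr 2
  have h2 : LinearMap.det (Algebra.lmul ℝ ℂ N) = Algebra.norm ℝ N := (Algebra.norm_apply ℝ N).symm
  rw [h2, Algebra.norm_complex_apply, _root_.abs_of_nonneg (Complex.normSq_nonneg N), ← Complex.sq_norm]

lemma vcell_vol_pos {τ : ℂ} (him : τ.im ≠ 0) : 0 < volume (vcell τ) := by
  have hr0 : 0 < min 1 |τ.im| / 2 := by
    have : 0 < min 1 |τ.im| := lt_min one_pos (abs_pos.mpr him)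
    positivity
  calc (0:ℝ≥0∞) < volume (ball (0:ℂ) (min 1 |τ.im| / 2)) := by
        rw [Complex.volume_ball]
        refine ENNReal.mul_pos ?_ ?_
        · have := ENNReal.ofReal_pos.mpr hr0
          positivity
        · exact ENNReal.coe_ne_zero.mpr (NNReal.pi_ne_zero)
    _ ≤ volume (vcell τ) := measure_mono (ball_subset_vcell him)

lemma vcell_vol_lt_top {τ : ℂ} (him : τ.im ≠ 0) : volume (vcell τ) < ⊤ :=
  lt_of_le_of_lt (measure_mono (vcell_subset him))
    (by
      rw [Complex.volume_closedBall]
      exact ENNReal.mul_lt_top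
        (ENNReal.pow_ne_top ENNReal.ofReal_ne_top).lt_top ENNReal.coe_ne_top.lt_top)

end VoronoiAux

/-- **Covering the boundary by Voronoi cells, and lattice point counting.**
Let `Λ = ℤ + ℤτ` (for an imaginary quadratic algebraic integer `τ`) be a lattice in `ℂ`
with Voronoi cell `V` of `0`, and let `U ⊆ ℂ` be a bounded measurable set whose boundary
consists of finitely many rectifiable curves. Then the number of Voronoi cells of `Λ`
needed to cover the boundary of `N·U` is `O(|N|)` as `N → ∞` in `ℂ`; in particular, the
number of lattice points of `Λ` in `N·U` equals `|N|² λ(U)/λ(V) + O(|N|)`. -/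
theorem voronoi_boundary_covering_and_lattice_count (p q : ℤ) (τ : ℂ)
    (hτq : τ ^ 2 - (p : ℂ) * τ + (q : ℂ) = 0) (hdisc : p ^ 2 < 4 * q)
    (U : Set ℂ) (hUb : Bornology.IsBounded U) (hUm : MeasurableSet U)
    (n : ℕ) (γ : Fin n → ℝ → ℂ)
    (hγc : ∀ i, ContinuousOn (γ i) (Set.Icc 0 1))
    (hγrect : ∀ i, eVariationOn (γ i) (Set.Icc 0 1) < ⊤)
    (hγcover : frontier U = ⋃ i, γ i '' Set.Icc (0 : ℝ) 1) :
    (∃ A : ℝ, ∀ N : ℂ, 1 ≤ ‖N‖ →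
      (Set.ncard {z : ℂ | (∃ a b : ℤ, z = (a : ℂ) + (b : ℂ) * τ) ∧
          ∃ v : ℂ, (∀ a b : ℤ, ‖v‖ ≤ ‖v - ((a : ℂ) + (b : ℂ) * τ)‖) ∧
            z + v ∈ frontier ((fun u => N * u) '' U)} : ℝ) ≤ A * ‖N‖) ∧
    (∃ B : ℝ, ∀ N : ℂ, 1 ≤ ‖N‖ →
      |(Set.ncard ((fun u => N * u) '' U ∩
          {z : ℂ | ∃ a b : ℤ, z = (a : ℂ) + (b : ℂ) * τ}) : ℝ) -
        ‖N‖ ^ 2 * (MeasureTheory.volume U).toReal /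
          (MeasureTheory.volume
            {v : ℂ | ∀ a b : ℤ, ‖v‖ ≤ ‖v - ((a : ℂ) + (b : ℂ) * τ)‖}).toReal| ≤
      B * ‖N‖) := by
  classical
  have him : τ.im ≠ 0 := im_ne hτq hdisc
  set R : ℝ := (1 + norm τ) / 2 with hRdef
  obtain ⟨K, hK0, hK⟩ := lat_count him (1 + R)
  set ℓ : Fin n → ℝ := fun i => (eVariationOn (γ i) (Set.Icc 0 1)).toReal with hℓdef
  have hℓ0 : ∀ i, 0 ≤ ℓ i := fun i => ENNReal.toReal_nonneg
  set A : ℝ := (∑ i, (ℓ i + 3)) * K with hAdef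
  have hA0 : 0 ≤ A :=
    mul_nonneg (Finset.sum_nonneg fun i _ => by linarith [hℓ0 i]) hK0
  set Bs : ℂ → Set ℂ := fun N => {z : ℂ | z ∈ lat τ ∧
    ∃ v ∈ vcell τ, z + v ∈ frontier ((fun u => N * u) '' U)} with hBsdef
  have hfc : ∀ (N : ℂ) (i : Fin n), ContinuousOn (fun t => N * γ i t) (Set.Icc 0 1) :=
    fun N i => (continuous_mul_left N).comp_continuousOn (hγc i)
  have hfv : ∀ (N : ℂ) (i : Fin n), eVariationOn (fun t => N * γ i t) (Set.Icc 0 1) ≠ ⊤ :=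
    fun N i => ne_top_of_le_ne_top
      (ENNReal.mul_ne_top ENNReal.coe_ne_top (hγrect i).ne) (evar_mul_le N (γ i) _)
  have hfrN : ∀ N : ℂ, N ≠ 0 → frontier ((fun u => N * u) '' U)
      = ⋃ i, (fun t => N * γ i t) '' Set.Icc (0:ℝ) 1 := by
    intro N hN0
    rw [frontier_mul_image hN0, hγcover, Set.image_iUnion]
    simp only [Set.image_image]
  have habs0 : ∀ N : ℂ, 1 ≤ norm N → N ≠ 0 := by
    rintro N hN rfl
    rw [norm_zero] at hN
    linarith
  -- Part 1 : boundary cells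
  have part1 : ∀ N : ℂ, 1 ≤ norm N →
      (Bs N).Finite ∧ ((Bs N).ncard : ℝ) ≤ A * norm N := by
    intro N hN
    have hN0 : N ≠ 0 := habs0 N hN
    choose C hCcard hCcov using fun i => bv_cover' (hfc N i) (hfv N i) one_pos
    have hCcard' : ∀ i, ((C i).card : ℝ) ≤ norm N * ℓ i + 3 := by
      intro i
      refine le_trans (hCcard i) ?_
      have h1 : (eVariationOn (fun t => N * γ i t) (Set.Icc 0 1)).toReal
          ≤ norm N * ℓ i := by
        have h2 := evar_mul_le N (γ i) (Set.Icc (0:ℝ) 1)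
        have h3 := ENNReal.toReal_mono
          (ENNReal.mul_ne_top ENNReal.coe_ne_top (hγrect i).ne) h2
        rwa [ENNReal.toReal_mul, ENNReal.coe_toReal, coe_nnnorm] at h3
      rw [div_one]
      linarith
    set T : Finset ℂ := Finset.univ.biUnion (fun i => C i) with hT
    have hFx : ∀ x : ℂ, (lat τ ∩ closedBall x (1 + R)).Finite :=
      fun x => lat_inter_finite him Metric.isBounded_closedBall
    have hsub : Bs N ⊆ ⋃ x ∈ T, (lat τ ∩ closedBall x (1 + R)) := by
      rintro z ⟨hzlat, v, hv, hzv⟩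
      rw [hfrN N hN0] at hzv
      obtain ⟨i, hi⟩ := Set.mem_iUnion.mp hzv
      have h4 := hCcov i hi
      rw [Set.mem_iUnion₂] at h4
      obtain ⟨x, hx, hball⟩ := h4
      refine Set.mem_biUnion (Finset.mem_biUnion.mpr ⟨i, Finset.mem_univ i, hx⟩) ⟨hzlat, ?_⟩
      rw [mem_closedBall, Complex.dist_eq]
      have h1 : norm (z + v - x) ≤ 1 := by
        rw [mem_closedBall, Complex.dist_eq] at hball
        exact hball
      have h2 : norm v ≤ R := by
        have h5 := vcell_subset him hv
        rw [mem_closedBall, dist_zero_right] at h5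
        exact h5
      have h6 : z - x = (z + v - x) - v := by ring
      rw [h6]
      calc norm ((z + v - x) - v) = ‖(z + v - x) - v‖ := rfl
        _ ≤ ‖z + v - x‖ + ‖v‖ := norm_sub_le _ _
        _ = norm (z + v - x) + norm v := by
            rfl
        _ ≤ 1 + R := add_le_add h1 h2
    have hfin : (Bs N).Finite :=
      Set.Finite.subset (Set.Finite.biUnion T.finite_toSet (fun x _ => hFx x)) hsub
    refine ⟨hfin, ?_⟩
    set T2 : Finset ℂ := T.biUnion (fun x => (hFx x).toFinset) with hT2
    have hsub2 : Bs N ⊆ ↑T2 := by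
      intro z hz
      obtain ⟨x, hxT, hzx⟩ := Set.mem_iUnion₂.mp (hsub hz)
      exact Finset.mem_coe.mpr (Finset.mem_biUnion.mpr ⟨x, hxT, (hFx x).mem_toFinset.mpr hzx⟩)
    have hcard : ((Bs N).ncard : ℝ) ≤ (T2.card : ℝ) := by
      have h7 := Set.ncard_le_ncard hsub2 T2.finite_toSet
      rw [Set.ncard_coe_finset] at h7
      exact_mod_cast h7
    have hT2card : (T2.card : ℝ) ≤ (∑ i, ((C i).card : ℝ)) * K := by
      have h1 : T2.card ≤ ∑ x ∈ T, ((hFx x).toFinset).card := Finset.card_biUnion_le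
      have h2 : ∀ x : ℂ, (((hFx x).toFinset).card : ℝ) ≤ K := by
        intro x
        rw [← Set.ncard_eq_toFinset_card _ (hFx x)]
        exact hK x
      calc (T2.card : ℝ) ≤ ∑ x ∈ T, (((hFx x).toFinset).card : ℝ) := by exact_mod_cast h1
        _ ≤ ∑ _x ∈ T, K := Finset.sum_le_sum (fun x _ => h2 x)
        _ = T.card * K := by rw [Finset.sum_const, nsmul_eq_mul]
        _ ≤ (∑ i, ((C i).card : ℝ)) * K := by
            refine mul_le_mul_of_nonneg_right ?_ hK0
            have h8 : T.card ≤ ∑ i, (C i).card := Finset.card_biUnion_le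
            calc (T.card : ℝ) ≤ ((∑ i, (C i).card : ℕ) : ℝ) := by exact_mod_cast h8
              _ = ∑ i, ((C i).card : ℝ) := by push_cast; rfl
    calc ((Bs N).ncard : ℝ) ≤ (∑ i, ((C i).card : ℝ)) * K := le_trans hcard hT2card
      _ ≤ (∑ i, (norm N * ℓ i + 3)) * K :=
          mul_le_mul_of_nonneg_right (Finset.sum_le_sum fun i _ => hCcard' i) hK0
      _ ≤ (norm N * ∑ i, (ℓ i + 3)) * K := by
          refine mul_le_mul_of_nonneg_right ?_ hK0
          rw [Finset.mul_sum]
          refine Finset.sum_le_sum fun i _ => ?_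
          have := hℓ0 i
          nlinarith
      _ = A * norm N := by rw [hAdef]; ring
  -- Part 2 : lattice point count
  have hUvol : volume U ≠ ⊤ := by
    obtain ⟨ρU, hρU⟩ := hUb.subset_closedBall 0
    refine ne_top_of_le_ne_top ?_ (measure_mono hρU)
    rw [Complex.volume_closedBall]
    exact (ENNReal.mul_lt_top (ENNReal.pow_ne_top ENNReal.ofReal_ne_top).lt_top
      ENNReal.coe_ne_top.lt_top).ne
  have hvV0 : 0 < (volume (vcell τ)).toReal :=
    ENNReal.toReal_pos (vcell_vol_pos him).ne' (vcell_vol_lt_top him).ne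
  have part2 : ∀ N : ℂ, 1 ≤ norm N →
      |(((fun u => N * u) '' U ∩ lat τ).ncard : ℝ) -
        norm N ^ 2 * (volume U).toReal / (volume (vcell τ)).toReal|
      ≤ A * norm N := by
    intro N hN
    have hN0 : N ≠ 0 := habs0 N hN
    set D : Set ℂ := (fun u => N * u) '' U with hD
    have hDb : Bornology.IsBounded D := (lipschitz_mul_left N).isBounded_image hUb
    have hfr0 : volume (frontier D) = 0 := by
      rw [hD, hfrN N hN0]
      exact measure_iUnion_null fun i => curve_image_null (hfc N i) (hfv N i)
    have hvolD : volume D = ENNReal.ofReal (norm N ^ 2) * volume U := vol_mul_image N U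
    have hSfin : (D ∩ lat τ).Finite :=
      Set.Finite.subset (lat_inter_finite him hDb) (Set.inter_comm D (lat τ)).subset
    set Sf : Finset ℂ := hSfin.toFinset with hSf
    have hBfin := (part1 N hN).1
    set Bf : Finset ℂ := hBfin.toFinset with hBf
    have hSlat : ∀ z ∈ Sf, z ∈ lat τ := fun z hz => (hSfin.mem_toFinset.mp hz).2
    have hBlat : ∀ z ∈ Bf, z ∈ lat τ := fun z hz => (hBfin.mem_toFinset.mp hz).1
    have key1 : ∀ z ∈ Sf \ Bf, cellAt τ z ⊆ closure D := by
      intro z hz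
      rw [Finset.mem_sdiff] at hz
      have hzS := hSfin.mem_toFinset.mp hz.1
      have hzB : z ∉ Bs N := fun h => hz.2 (hBfin.mem_toFinset.mpr h)
      have hno : ∀ v ∈ vcell τ, z + v ∉ frontier D := fun v hv hvf => hzB ⟨hzS.2, v, hv, hvf⟩
      rcases cell_dichotomy hno with h | h
      · exact h.trans (interior_subset.trans subset_closure)
      · exact absurd (subset_closure hzS.1) (h (mem_cellAt_self τ z))
    have key2 : ∀ z ∈ lat τ, z ∉ Bs N → (cellAt τ z ∩ D).Nonempty → z ∈ Sf := by
      rintro z hzlat hzB ⟨x, hx1, hx2⟩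
      have hno : ∀ v ∈ vcell τ, z + v ∉ frontier D := fun v hv hvf => hzB ⟨hzlat, v, hv, hvf⟩
      rcases cell_dichotomy hno with h | h
      · exact hSfin.mem_toFinset.mpr ⟨interior_subset (h (mem_cellAt_self τ z)), hzlat⟩
      · exact absurd (subset_closure hx2) (h hx1)
    have hup : (((Sf \ Bf).card : ℝ≥0∞)) * volume (vcell τ)
        ≤ ENNReal.ofReal (norm N ^ 2) * volume U := by
      rw [← vol_biUnion_cells him (fun z hz => hSlat z (Finset.mem_sdiff.mp hz).1)]
      refine le_trans (measure_mono (Set.iUnion₂_subset key1)) ?_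
      calc volume (closure D) ≤ volume (D ∪ frontier D) := by
            rw [← closure_eq_self_union_frontier]
        _ ≤ volume D + volume (frontier D) := measure_union_le _ _
        _ = volume D := by rw [hfr0, add_zero]
        _ = _ := hvolD
    have hdown : ENNReal.ofReal (norm N ^ 2) * volume U
        ≤ ((Sf ∪ Bf).card : ℝ≥0∞) * volume (vcell τ) := by
      rw [← hvolD, ← vol_biUnion_cells him (fun z hz => by
        rcases Finset.mem_union.mp hz with h | h
        exacts [hSlat z h, hBlat z h])]
      refine measure_mono fun x hx => ?_
      obtain ⟨z, hzlat, hzv⟩ := exists_nearest him x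
      have hxz : x ∈ cellAt τ z := hzv
      have hzin : z ∈ Sf ∪ Bf := by
        by_cases hzB : z ∈ Bs N
        · exact Finset.mem_union_right _ (hBfin.mem_toFinset.mpr hzB)
        · exact Finset.mem_union_left _ (key2 z hzlat hzB ⟨x, hxz, hx⟩)
      exact Set.mem_biUnion hzin hxz
    set vV : ℝ := (volume (vcell τ)).toReal with hvV
    set vU : ℝ := (volume U).toReal with hvU
    have hupR : ((Sf \ Bf).card : ℝ) * vV ≤ norm N ^ 2 * vU := by
      have h9 := ENNReal.toReal_mono (ENNReal.mul_ne_top ENNReal.ofReal_ne_top hUvol) hup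
      rwa [ENNReal.toReal_mul, ENNReal.toReal_mul, ENNReal.toReal_natCast,
        ENNReal.toReal_ofReal (by positivity)] at h9
    have hdownR : norm N ^ 2 * vU ≤ ((Sf ∪ Bf).card : ℝ) * vV := by
      have h9 := ENNReal.toReal_mono
        (ENNReal.mul_ne_top (ENNReal.natCast_ne_top _) (vcell_vol_lt_top him).ne) hdown
      rwa [ENNReal.toReal_mul, ENNReal.toReal_mul, ENNReal.toReal_natCast,
        ENNReal.toReal_ofReal (by positivity)] at h9
    have hsd : (Sf.card : ℝ) - Bf.card ≤ ((Sf \ Bf).card : ℝ) := by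
      have h10 : Sf.card ≤ (Sf \ Bf).card + Bf.card := Finset.card_le_card_sdiff_add_card
      have h11 : (Sf.card : ℝ) ≤ ((Sf \ Bf).card : ℝ) + Bf.card := by exact_mod_cast h10
      linarith
    have hun : ((Sf ∪ Bf).card : ℝ) ≤ (Sf.card : ℝ) + Bf.card := by
      exact_mod_cast Finset.card_union_le Sf Bf
    have hk : (((fun u => N * u) '' U ∩ lat τ).ncard : ℝ) = Sf.card := by
      rw [Set.ncard_eq_toFinset_card _ hSfin]
    have hmA : (Bf.card : ℝ) ≤ A * norm N := by
      have h12 := (part1 N hN).2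
      rwa [Set.ncard_eq_toFinset_card _ hBfin] at h12
    rw [hk, abs_le]
    have h1 : ((Sf.card : ℝ) - Bf.card) * vV ≤ norm N ^ 2 * vU :=
      le_trans (mul_le_mul_of_nonneg_right hsd hvV0.le) hupR
    have h2 : norm N ^ 2 * vU ≤ ((Sf.card : ℝ) + Bf.card) * vV :=
      le_trans hdownR (mul_le_mul_of_nonneg_right hun hvV0.le)
    have h3 : norm N ^ 2 * vU / vV ≤ (Sf.card : ℝ) + Bf.card :=
      (div_le_iff₀ hvV0).mpr h2
    have h4 : (Sf.card : ℝ) - Bf.card ≤ norm N ^ 2 * vU / vV :=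
      (le_div_iff₀ hvV0).mpr h1
    constructor
    · linarith
    · linarith
  exact ⟨⟨A, fun N hN => (part1 N hN).2⟩, ⟨A, fun N hN => part2 N hN⟩⟩
end
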